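/- arXiv:1607.01113 — 6 statements merged into one kernel-verified Lean document; each statement's English description precedes it below -/
import Mathlib

section
/- For every q with q > 5 or 0 ≤ q < 3 there exists a constant C_q > 0 such that for every nonnegative measurable g : ℝ³ → ℝ with 0 < ρ < ∞, finite second moment ∫|v|²g(v)dv < ∞, and 0 < T < ∞, one has ρ·(T + |u|²)^{(q−3)/2} ≤ C_q·N_q(g). -/
open MeasureTheory Real Matrix ENNReal

noncomputable section

/-- Velocity/position space `ℝ³`. -/
abbrev E3 : Type := EuclideanSpace ℝ (Fin 3)

/-- The normalized global Maxwellian `μ(v) = (2π)^{-3/2} exp(-|v|²/2)`. -/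
def Mw (v : E3) : ℝ := (2 * π) ^ (-(3 : ℝ) / 2) * Real.exp (-‖v‖ ^ 2 / 2)

/-- Density `ρ = ∫ g dv`. -/
def dens (g : E3 → ℝ) : ℝ := ∫ v, g v

/-- Bulk velocity `u = ρ⁻¹ ∫ v g dv`. -/
def bulk (g : E3 → ℝ) : E3 := (dens g)⁻¹ • ∫ v, g v • v

/-- Temperature `T = (3ρ)⁻¹ ∫ |v-u|² g dv`. -/
def temp (g : E3 → ℝ) : ℝ := (3 * dens g)⁻¹ * ∫ v, ‖v - bulk g‖ ^ 2 * g v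

/-- Stress tensor `Θ = ρ⁻¹ ∫ (v-u)⊗(v-u) g dv`. -/
def stress (g : E3 → ℝ) : Matrix (Fin 3) (Fin 3) ℝ :=
  Matrix.of fun i j => (dens g)⁻¹ * ∫ v, (v - bulk g) i * (v - bulk g) j * g v

/-- Temperature tensor `𝒯_ν = (1-ν) T Id + ν Θ`. -/
def tempTensor (g : E3 → ℝ) (ν : ℝ) : Matrix (Fin 3) (Fin 3) ℝ :=
  ((1 - ν) * temp g) • (1 : Matrix (Fin 3) (Fin 3) ℝ) + ν • stress g

/-- Anisotropic Gaussian `M_ν = ρ det(2π𝒯_ν)^{-1/2} exp(-½ (v-u)ᵀ𝒯_ν⁻¹(v-u))`. -/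
def aGauss (g : E3 → ℝ) (ν : ℝ) (v : E3) : ℝ :=
  dens g / Real.sqrt (((2 * π) • tempTensor g ν).det) *
    Real.exp (-(1 / 2) *
      ((fun i => (v - bulk g) i) ⬝ᵥ ((tempTensor g ν)⁻¹ *ᵥ fun i => (v - bulk g) i)))

/-- Collision frequency `A_ν = ρT/(1-ν)`. -/
def collFreq (g : E3 → ℝ) (ν : ℝ) : ℝ := dens g * temp g / (1 - ν)

/-- Weighted sup-norm `‖w f‖_{L^∞} = sup_{x,v} (1+|v|)^β f(x,v)`. -/
def wSup (β : ℝ) (f : E3 → E3 → ℝ) : ℝ :=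
  ⨆ p : E3 × E3, (1 + ‖p.2‖) ^ β * f p.1 p.2

/-- Finiteness of the weighted sup-norm. -/
def WBdd (β : ℝ) (f : E3 → E3 → ℝ) : Prop :=
  BddAbove (Set.range fun p : E3 × E3 => (1 + ‖p.2‖) ^ β * f p.1 p.2)

/-- A (global-in-time) mild solution of the ES-BGK equation
`∂ₜF + v·∇ₓF = A_ν (M_ν - F)` with initial datum `F₀`. -/
structure IsMildSolution (ν β : ℝ) (F₀ : E3 → E3 → ℝ) (F : ℝ → E3 → E3 → ℝ) : Prop where
  nonneg : ∀ t, 0 ≤ t → ∀ x v, 0 ≤ F t x v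
  meas : ∀ t, 0 ≤ t → Measurable fun p : E3 × E3 => F t p.1 p.2
  integrable : ∀ t, 0 ≤ t → ∀ x, Integrable (F t x)
  moment2 : ∀ t, 0 ≤ t → ∀ x, Integrable fun v => ‖v‖ ^ 2 * F t x v
  dens_pos : ∀ t, 0 ≤ t → ∀ x, 0 < dens (F t x)
  temp_pos : ∀ t, 0 ≤ t → ∀ x, 0 < temp (F t x)
  wnorm_bdd : ∀ t, 0 ≤ t → WBdd β (F t)
  wnorm_cont : ContinuousOn (fun t => wSup β (F t)) (Set.Ici 0)
  mild : ∀ t, 0 ≤ t → ∀ x v,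
    F t x v = F₀ (x - t • v) v *
        Real.exp (-(∫ τ in (0 : ℝ)..t, collFreq (F τ (x - (t - τ) • v)) ν))
      + ∫ s in (0 : ℝ)..t,
          Real.exp (-(∫ τ in s..t, collFreq (F τ (x - (t - τ) • v)) ν)) *
            collFreq (F s (x - (t - s) • v)) ν * aGauss (F s (x - (t - s) • v)) ν v

/-- The entropy functional `ℰ(F₀)`. -/
def entE (F₀ : E3 → E3 → ℝ) : ℝ :=
  (∫ p : E3 × E3, (F₀ p.1 p.2 * Real.log (F₀ p.1 p.2) - Mw p.2 * Real.log (Mw p.2)))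
    + (3 / 2 * Real.log (2 * π) - 1) * (∫ p : E3 × E3, (F₀ p.1 p.2 - Mw p.2))
    + 1 / 2 * ∫ p : E3 × E3, ‖p.2‖ ^ 2 * (F₀ p.1 p.2 - Mw p.2)

/-- Componentwise absolute value of `∫ (1, v, |v|², v⊗v) (f - μ) dv`. -/
def momentGap (f : E3 → ℝ) : ℝ :=
  |∫ v, (f v - Mw v)| ⊔ (⨆ i : Fin 3, |∫ v, v i * (f v - Mw v)|) ⊔
    |∫ v, ‖v‖ ^ 2 * (f v - Mw v)| ⊔
    ⨆ ij : Fin 3 × Fin 3, |∫ v, v ij.1 * v ij.2 * (f v - Mw v)|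

/-- `N_q(g) = sup_v (1+|v|)^q g(v)`, valued in `ℝ≥0∞`. -/
def Nq (q : ℝ) (g : E3 → ℝ) : ℝ≥0∞ :=
  ⨆ v : E3, ENNReal.ofReal ((1 + ‖v‖) ^ q * g v)

end

section Aux
open Metric Set

noncomputable def kap : ℝ := 3 * (volume (Metric.ball (0:E3) 1)).toReal

lemma kap_pos : 0 < kap := by
  unfold kap
  have h1 : 0 < volume (Metric.ball (0:E3) 1) := measure_ball_pos _ _ one_pos
  have h2 : volume (Metric.ball (0:E3) 1) < ⊤ := measure_ball_lt_top
  have := ENNReal.toReal_pos h1.ne' h2.ne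
  linarith

lemma polar3 (f : ℝ → ℝ) :
    ∫ x : E3, f ‖x‖ = kap * ∫ y in Ioi (0:ℝ), y ^ 2 * f y := by
  have h := MeasureTheory.integral_fun_norm_addHaar (volume : Measure E3) f
  simp only [finrank_euclideanSpace, Fintype.card_fin, smul_eq_mul, nsmul_eq_mul] at h
  rw [h, kap]
  simp only [measureReal_def]
  norm_num
  ring

lemma weight_cont3 (q : ℝ) : Continuous fun v : E3 => (1 + ‖v‖) ^ (-q) :=
  (continuous_const.add continuous_norm).rpow_const fun v => Or.inl (by positivity : (1:ℝ) + ‖v‖ ≠ 0)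

lemma weight_contOn (q : ℝ) {s : Set ℝ} (hs : ∀ y ∈ s, (0:ℝ) < y) :
    ContinuousOn (fun y : ℝ => y ^ 2 * (1 + y) ^ (-q)) s :=
  (continuousOn_pow 2).mul <| (continuousOn_const.add continuousOn_id).rpow_const
    fun y hy => Or.inl (by have := hs y hy; positivity : (1:ℝ) + y ≠ 0)

lemma one_add_rpow_le {y q : ℝ} (hy : 0 < y) (hq : 0 ≤ q) :
    (1 + y) ^ (-q) ≤ y ^ (-q) :=
  Real.rpow_le_rpow_of_nonpos hy (by linarith) (by linarith)

/-- q < 3 ball bound -/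
lemma ball_weight_bound {q R : ℝ} (hq0 : 0 ≤ q) (hq3 : q < 3) (hR : 0 < R) :
    ∫ v in Metric.ball (0:E3) R, (1 + ‖v‖) ^ (-q) ≤ kap * (R ^ (3 - q) / (3 - q)) := by
  set f : ℝ → ℝ := fun y => if y < R then (1 + y) ^ (-q) else 0 with hf
  have h1 : ∫ v in Metric.ball (0:E3) R, (1 + ‖v‖) ^ (-q) = ∫ x : E3, f ‖x‖ := by
    rw [← integral_indicator measurableSet_ball]
    congr 1; funext v
    simp [Set.indicator, hf, mem_ball_zero_iff]
  rw [h1, polar3]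
  have h2 : ∫ y in Ioi (0:ℝ), y ^ 2 * f y = ∫ y in Ioo (0:ℝ) R, y ^ 2 * (1 + y) ^ (-q) := by
    calc ∫ y in Ioi (0:ℝ), y ^ 2 * f y
        = ∫ y in Ioi (0:ℝ), Set.indicator (Iio R) (fun y : ℝ => y ^ 2 * (1 + y) ^ (-q)) y := by
          congr 1; funext y
          simp only [Set.indicator, Set.mem_Iio, hf]
          split <;> simp
      _ = ∫ y in Ioi (0:ℝ) ∩ Iio R, y ^ 2 * (1 + y) ^ (-q) :=
          setIntegral_indicator measurableSet_Iio
      _ = ∫ y in Ioo (0:ℝ) R, y ^ 2 * (1 + y) ^ (-q) := by rw [Set.Ioi_inter_Iio]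
  rw [h2]
  have hig : IntegrableOn (fun y : ℝ => y ^ (2 - q)) (Ioo 0 R) := by
    have := (intervalIntegral.intervalIntegrable_rpow' (a := 0) (b := R)
      (r := 2 - q) (by linarith)).1
    exact this.mono_set Set.Ioo_subset_Ioc_self
  have hbd : ∀ y ∈ Ioo (0:ℝ) R, y ^ 2 * (1 + y) ^ (-q) ≤ y ^ (2 - q) := by
    intro y hy
    have hy0 : (0:ℝ) < y := hy.1
    have : y ^ (2 - q) = y ^ (2:ℝ) * y ^ (-q) := by
      rw [← Real.rpow_add hy0]; ring_nf
    rw [this, Real.rpow_two]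
    exact mul_le_mul_of_nonneg_left (one_add_rpow_le hy0 hq0) (by positivity)
  have hif : IntegrableOn (fun y : ℝ => y ^ 2 * (1 + y) ^ (-q)) (Ioo 0 R) := by
    refine hig.mono' ?_ ?_
    · exact (weight_contOn q fun y hy => hy.1).aestronglyMeasurable measurableSet_Ioo
    · refine (ae_restrict_iff' measurableSet_Ioo).2 (ae_of_all _ fun y hy => ?_)
      have hy0 : (0:ℝ) < y := hy.1
      rw [Real.norm_eq_abs, abs_of_nonneg (by positivity)]
      exact hbd y hy
  have h3 : ∫ y in Ioo (0:ℝ) R, y ^ 2 * (1 + y) ^ (-q) ≤ ∫ y in Ioo (0:ℝ) R, y ^ (2 - q) :=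
    setIntegral_mono_on hif hig measurableSet_Ioo hbd
  have h4 : ∫ y in Ioo (0:ℝ) R, y ^ (2 - q) = R ^ (3 - q) / (3 - q) := by
    rw [← integral_Ioc_eq_integral_Ioo, ← intervalIntegral.integral_of_le hR.le,
        integral_rpow (Or.inl (by linarith))]
    rw [Real.zero_rpow (by intro h; linarith [h])]
    · ring_nf
  calc kap * ∫ y in Ioo (0:ℝ) R, y ^ 2 * (1 + y) ^ (-q)
      ≤ kap * ∫ y in Ioo (0:ℝ) R, y ^ (2 - q) :=
        mul_le_mul_of_nonneg_left h3 kap_pos.le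
    _ = kap * (R ^ (3 - q) / (3 - q)) := by rw [h4]

/-- q > 5 tail bound -/
lemma tail_weight_bound {q R : ℝ} (hq : 5 < q) (hR : 0 < R) :
    ∫ v in (Metric.ball (0:E3) R)ᶜ, ‖v‖ ^ 2 * (1 + ‖v‖) ^ (-q)
      ≤ kap * (R ^ (5 - q) / (q - 5)) := by
  set f : ℝ → ℝ := fun y => if R ≤ y then y ^ 2 * (1 + y) ^ (-q) else 0 with hf
  have h1 : ∫ v in (Metric.ball (0:E3) R)ᶜ, ‖v‖ ^ 2 * (1 + ‖v‖) ^ (-q) = ∫ x : E3, f ‖x‖ := by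
    rw [← integral_indicator measurableSet_ball.compl]
    congr 1; funext v
    simp only [Set.indicator, Set.mem_compl_iff, mem_ball_zero_iff, not_lt, hf]
  rw [h1, polar3]
  have h2 : ∫ y in Ioi (0:ℝ), y ^ 2 * f y = ∫ y in Ioi R, y ^ 4 * (1 + y) ^ (-q) := by
    calc ∫ y in Ioi (0:ℝ), y ^ 2 * f y
        = ∫ y in Ioi (0:ℝ), Set.indicator (Ici R) (fun y : ℝ => y ^ 4 * (1 + y) ^ (-q)) y := by
          congr 1; funext y
          simp only [Set.indicator, Set.mem_Ici, hf]
          split <;> ring_nf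
      _ = ∫ y in Ioi (0:ℝ) ∩ Ici R, y ^ 4 * (1 + y) ^ (-q) :=
          setIntegral_indicator measurableSet_Ici
      _ = ∫ y in Ici R, y ^ 4 * (1 + y) ^ (-q) := by
          rw [show Ioi (0:ℝ) ∩ Ici R = Ici R from
            Set.inter_eq_right.2 fun y hy => lt_of_lt_of_le hR hy]
      _ = ∫ y in Ioi R, y ^ 4 * (1 + y) ^ (-q) := by
          rw [integral_Ici_eq_integral_Ioi]
  rw [h2]
  have hig : IntegrableOn (fun y : ℝ => y ^ (4 - q)) (Ioi R) :=
    integrableOn_Ioi_rpow_of_lt (by linarith) hR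
  have hbd : ∀ y ∈ Ioi R, y ^ 4 * (1 + y) ^ (-q) ≤ y ^ (4 - q) := by
    intro y hy
    have hy0 : (0:ℝ) < y := lt_trans hR hy
    have h5 : y ^ (4 - q) = y ^ (4:ℕ) * y ^ (-q) := by
      rw [← Real.rpow_natCast y 4, ← Real.rpow_add hy0]; norm_num; ring_nf
    rw [h5]
    exact mul_le_mul_of_nonneg_left (one_add_rpow_le hy0 (by linarith)) (by positivity)
  have hif : IntegrableOn (fun y : ℝ => y ^ 4 * (1 + y) ^ (-q)) (Ioi R) := by
    refine hig.mono' ?_ ?_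
    · exact (((continuousOn_pow 4).mul <|
        (continuousOn_const.add continuousOn_id).rpow_const
          fun y (hy : y ∈ Ioi R) => Or.inl (by have := lt_trans hR hy; positivity : (1:ℝ) + y ≠ 0)).aestronglyMeasurable
        measurableSet_Ioi)
    · refine (ae_restrict_iff' measurableSet_Ioi).2 (ae_of_all _ fun y hy => ?_)
      have hy0 : (0:ℝ) < y := lt_trans hR hy
      rw [Real.norm_eq_abs, abs_of_nonneg (by positivity)]
      exact hbd y hy
  have h3 : ∫ y in Ioi R, y ^ 4 * (1 + y) ^ (-q) ≤ ∫ y in Ioi R, y ^ (4 - q) :=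
    setIntegral_mono_on hif hig measurableSet_Ioi hbd
  have h4 : ∫ y in Ioi R, y ^ (4 - q) = R ^ (5 - q) / (q - 5) := by
    rw [integral_Ioi_rpow_of_lt (by linarith) hR]
    have : 4 - q + 1 = 5 - q := by ring
    rw [this, neg_div, ← div_neg, neg_sub]
  calc kap * ∫ y in Ioi R, y ^ 4 * (1 + y) ^ (-q)
      ≤ kap * ∫ y in Ioi R, y ^ (4 - q) := mul_le_mul_of_nonneg_left h3 kap_pos.le
    _ = kap * (R ^ (5 - q) / (q - 5)) := by rw [h4]


lemma moment_identity (g : E3 → ℝ) (hgm : Measurable g) (hg0 : ∀ v, 0 ≤ g v)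
    (hI1 : Integrable g) (hρ : 0 < dens g)
    (hI2 : Integrable fun v => ‖v‖ ^ 2 * g v) :
    ∫ v, ‖v‖ ^ 2 * g v = dens g * (3 * temp g + ‖bulk g‖ ^ 2) := by
  set u : E3 := bulk g with hu
  have hIv : Integrable (fun v => g v • v) := by
    refine (hI2.add hI1).mono' ?_ (ae_of_all _ fun v => ?_)
    · exact (hgm.aestronglyMeasurable.smul aestronglyMeasurable_id)
    · simp only [Pi.add_apply]
      rw [norm_smul, Real.norm_eq_abs, abs_of_nonneg (hg0 v)]
      nlinarith [hg0 v, norm_nonneg v, sq_nonneg (‖v‖ - 1), mul_nonneg (hg0 v) (norm_nonneg v)]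
  have hmean : ∫ v, g v • v = dens g • u := by
    rw [hu, bulk, smul_smul, mul_inv_cancel₀ hρ.ne', one_smul]
  have hinner : Integrable (fun v => (inner ℝ u v : ℝ) * g v) := by
    have h2 : Integrable (fun v => (inner ℝ u (g v • v) : ℝ)) := hIv.const_inner u
    refine h2.congr (ae_of_all _ fun v => ?_)
    simp only [inner_smul_right]; ring
  have e1 : ∫ v, (inner ℝ u v : ℝ) * g v = dens g * ‖u‖ ^ 2 := by
    have h : ∀ v : E3, (inner ℝ u v : ℝ) * g v = (inner ℝ u (g v • v) : ℝ) := fun v => by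
      rw [inner_smul_right]; ring
    calc ∫ v, (inner ℝ u v : ℝ) * g v = ∫ v, (inner ℝ u (g v • v) : ℝ) := by simp_rw [h]
      _ = (inner ℝ u (∫ v, g v • v) : ℝ) := integral_inner hIv u
      _ = (inner ℝ u (dens g • u) : ℝ) := by rw [hmean]
      _ = dens g * ‖u‖ ^ 2 := by
          rw [inner_smul_right, real_inner_self_eq_norm_sq]
  have hTint : ∫ v, ‖v - u‖ ^ 2 * g v = 3 * dens g * temp g := by
    have h3ρ : (3 * dens g) ≠ 0 := by positivity
    rw [temp]
    field_simp
    rfl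
  have hpt : (fun v => ‖v - u‖ ^ 2 * g v)
      = fun v => (‖v‖ ^ 2 * g v - 2 * ((inner ℝ u v : ℝ) * g v)) + ‖u‖ ^ 2 * g v := by
    funext v
    rw [norm_sub_sq_real, real_inner_comm]
    ring
  have hint : ∫ v, ‖v - u‖ ^ 2 * g v
      = (∫ v, ‖v‖ ^ 2 * g v) - 2 * (dens g * ‖u‖ ^ 2) + ‖u‖ ^ 2 * dens g := by
    have hc2 : Integrable (fun v => 2 * ((inner ℝ u v : ℝ) * g v)) := hinner.const_mul 2
    have hsub : Integrable (fun v => ‖v‖ ^ 2 * g v - 2 * ((inner ℝ u v : ℝ) * g v)) :=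
      hI2.sub hc2
    have hc3 : Integrable (fun v => ‖u‖ ^ 2 * g v) := hI1.const_mul _
    rw [hpt, integral_add hsub hc3, integral_sub hI2 hc2,
        integral_const_mul, integral_const_mul, e1]
    rfl
  rw [hTint] at hint
  nlinarith [hint]

lemma case_lt3 (q : ℝ) (hq0 : 0 ≤ q) (hq3 : q < 3) (g : E3 → ℝ)
    (hgm : Measurable g) (hg0 : ∀ v, 0 ≤ g v) (hI1 : Integrable g) (hρ : 0 < dens g)
    (hI2 : Integrable fun v => ‖v‖ ^ 2 * g v) (hT : 0 < temp g)
    (M : ℝ) (hM0 : 0 ≤ M) (hMb : ∀ v, g v ≤ M * (1 + ‖v‖) ^ (-q)) :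
    dens g * (temp g + ‖bulk g‖ ^ 2) ^ ((q - 3) / 2)
      ≤ (2 * kap * 6 ^ ((3 - q) / 2) / (3 - q)) * M := by
  set u : E3 := bulk g
  set S : ℝ := temp g + ‖u‖ ^ 2 with hSdef
  have hS : 0 < S := by have := sq_nonneg ‖u‖; simp only [hSdef]; positivity
  set R : ℝ := Real.sqrt (6 * S) with hRdef
  have hR : 0 < R := Real.sqrt_pos.2 (by linarith)
  have hR2 : R ^ 2 = 6 * S := Real.sq_sqrt (by linarith)
  have hmom := moment_identity g hgm hg0 hI1 hρ hI2
  have hsplit : (∫ v in Metric.ball (0:E3) R, g v) + ∫ v in (Metric.ball (0:E3) R)ᶜ, g v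
      = dens g := integral_add_compl measurableSet_ball hI1
  -- tail bound
  have htail : ∫ v in (Metric.ball (0:E3) R)ᶜ, g v ≤ dens g / 2 := by
    have step1 : ∫ v in (Metric.ball (0:E3) R)ᶜ, g v
        ≤ ∫ v in (Metric.ball (0:E3) R)ᶜ, (R ^ 2)⁻¹ * (‖v‖ ^ 2 * g v) := by
      refine setIntegral_mono_on hI1.integrableOn
        ((hI2.const_mul _).integrableOn) measurableSet_ball.compl fun v hv => ?_
      have hvR : R ≤ ‖v‖ := by
        simpa [mem_ball_zero_iff, not_lt] using hv
      have h2 : R ^ 2 ≤ ‖v‖ ^ 2 := by nlinarith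
      have h3 : R ^ 2 * g v ≤ ‖v‖ ^ 2 * g v := mul_le_mul_of_nonneg_right h2 (hg0 v)
      calc g v = (R ^ 2)⁻¹ * (R ^ 2 * g v) := by
            field_simp
        _ ≤ (R ^ 2)⁻¹ * (‖v‖ ^ 2 * g v) := by
            exact mul_le_mul_of_nonneg_left h3 (by positivity)
    have step2 : ∫ v in (Metric.ball (0:E3) R)ᶜ, (R ^ 2)⁻¹ * (‖v‖ ^ 2 * g v)
        ≤ (R ^ 2)⁻¹ * ∫ v, ‖v‖ ^ 2 * g v := by
      rw [integral_const_mul]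
      refine mul_le_mul_of_nonneg_left ?_ (by positivity)
      exact setIntegral_le_integral hI2 (ae_of_all _ fun v => by
        have := hg0 v; positivity)
    have step3 : (R ^ 2)⁻¹ * ∫ v, ‖v‖ ^ 2 * g v ≤ dens g / 2 := by
      rw [hmom, hR2, inv_mul_le_iff₀ (by linarith)]
      have hu2 : (0:ℝ) ≤ ‖u‖ ^ 2 := sq_nonneg _
      have h36 : 3 * temp g + ‖u‖ ^ 2 ≤ 3 * S := by simp only [hSdef]; nlinarith
      nlinarith [hρ]
    linarith
  -- ball bound
  have hIw : IntegrableOn (fun v : E3 => (1 + ‖v‖) ^ (-q)) (Metric.ball (0:E3) R) := by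
    refine ((weight_cont3 q).continuousOn.integrableOn_compact
      (isCompact_closedBall (0:E3) R)).mono_set ball_subset_closedBall
  have hball : ∫ v in Metric.ball (0:E3) R, g v ≤ M * (kap * (R ^ (3 - q) / (3 - q))) := by
    calc ∫ v in Metric.ball (0:E3) R, g v
        ≤ ∫ v in Metric.ball (0:E3) R, M * (1 + ‖v‖) ^ (-q) :=
          setIntegral_mono_on hI1.integrableOn (hIw.const_mul M)
            measurableSet_ball fun v _ => hMb v
      _ = M * ∫ v in Metric.ball (0:E3) R, (1 + ‖v‖) ^ (-q) := integral_const_mul _ _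
      _ ≤ M * (kap * (R ^ (3 - q) / (3 - q))) :=
          mul_le_mul_of_nonneg_left (ball_weight_bound hq0 hq3 hR) hM0
  -- combine
  have hRpow : R ^ (3 - q) = 6 ^ ((3 - q) / 2) * S ^ ((3 - q) / 2) := by
    have h6S : (0:ℝ) ≤ 6 * S := by linarith
    rw [hRdef, Real.sqrt_eq_rpow, ← Real.rpow_mul h6S,
        show (1/2:ℝ) * (3 - q) = (3 - q) / 2 by ring,
        Real.mul_rpow (by norm_num) hS.le]
  have hρle : dens g ≤ (2 * kap * 6 ^ ((3 - q) / 2) / (3 - q)) * M * S ^ ((3 - q) / 2) := by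
    have : dens g / 2 ≤ M * (kap * (R ^ (3 - q) / (3 - q))) := by linarith
    rw [hRpow] at this
    have h3q : (0:ℝ) < 3 - q := by linarith
    rw [div_le_iff₀ (by norm_num : (0:ℝ) < 2)] at this
    calc dens g ≤ M * (kap * (6 ^ ((3 - q) / 2) * S ^ ((3 - q) / 2) / (3 - q))) * 2 := this
      _ = (2 * kap * 6 ^ ((3 - q) / 2) / (3 - q)) * M * S ^ ((3 - q) / 2) := by
          field_simp
  calc dens g * S ^ ((q - 3) / 2)
      ≤ ((2 * kap * 6 ^ ((3 - q) / 2) / (3 - q)) * M * S ^ ((3 - q) / 2)) * S ^ ((q - 3) / 2) :=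
        mul_le_mul_of_nonneg_right hρle (Real.rpow_nonneg hS.le _)
    _ = (2 * kap * 6 ^ ((3 - q) / 2) / (3 - q)) * M * (S ^ ((3 - q) / 2) * S ^ ((q - 3) / 2)) := by
        ring
    _ = (2 * kap * 6 ^ ((3 - q) / 2) / (3 - q)) * M := by
        rw [← Real.rpow_add hS, show (3 - q) / 2 + (q - 3) / 2 = (0:ℝ) by ring,
            Real.rpow_zero, mul_one]

lemma case_gt5 (q : ℝ) (hq : 5 < q) (g : E3 → ℝ)
    (hgm : Measurable g) (hg0 : ∀ v, 0 ≤ g v) (hI1 : Integrable g) (hρ : 0 < dens g)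
    (hI2 : Integrable fun v => ‖v‖ ^ 2 * g v) (hT : 0 < temp g)
    (M : ℝ) (hM0 : 0 ≤ M) (hMb : ∀ v, g v ≤ M * (1 + ‖v‖) ^ (-q)) :
    dens g * (temp g + ‖bulk g‖ ^ 2) ^ ((q - 3) / 2)
      ≤ (2 ^ ((q - 3) / 2) * kap / (q - 5)) * M := by
  set u : E3 := bulk g
  have hu2 : (0:ℝ) ≤ ‖u‖ ^ 2 := sq_nonneg _
  set X : ℝ := (3 * temp g + ‖u‖ ^ 2) / 2 with hXdef
  have hX : 0 < X := by simp only [hXdef]; positivity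
  set R : ℝ := Real.sqrt X with hRdef
  have hR : 0 < R := Real.sqrt_pos.2 hX
  have hR2 : R ^ 2 = X := Real.sq_sqrt hX.le
  have hmom := moment_identity g hgm hg0 hI1 hρ hI2
  have hsplit : (∫ v in Metric.ball (0:E3) R, ‖v‖ ^ 2 * g v)
      + ∫ v in (Metric.ball (0:E3) R)ᶜ, ‖v‖ ^ 2 * g v
      = ∫ v, ‖v‖ ^ 2 * g v := integral_add_compl measurableSet_ball hI2
  have hball : ∫ v in Metric.ball (0:E3) R, ‖v‖ ^ 2 * g v ≤ X * dens g := by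
    calc ∫ v in Metric.ball (0:E3) R, ‖v‖ ^ 2 * g v
        ≤ ∫ v in Metric.ball (0:E3) R, X * g v := by
          refine setIntegral_mono_on hI2.integrableOn
            ((hI1.const_mul X).integrableOn) measurableSet_ball fun v hv => ?_
          have hvR : ‖v‖ < R := by simpa [mem_ball_zero_iff] using hv
          have : ‖v‖ ^ 2 ≤ X := by nlinarith [norm_nonneg v]
          exact mul_le_mul_of_nonneg_right this (hg0 v)
      _ = X * ∫ v in Metric.ball (0:E3) R, g v := integral_const_mul _ _
      _ ≤ X * dens g := mul_le_mul_of_nonneg_left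
          (setIntegral_le_integral hI1 (ae_of_all _ fun v => hg0 v)) hX.le
  have hIw2 : IntegrableOn (fun v : E3 => ‖v‖ ^ 2 * (1 + ‖v‖) ^ (-q))
      (Metric.ball (0:E3) R)ᶜ := by
    have hglob : Integrable (fun v : E3 => (1 + ‖v‖) ^ (-(q - 2))) := by
      refine integrable_one_add_norm (E := E3) ?_
      simp only [finrank_euclideanSpace, Fintype.card_fin]
      norm_num
      linarith
    refine (hglob.mono' ((continuous_norm.pow 2).mul (weight_cont3 q)).aestronglyMeasurable
      (ae_of_all _ fun v => ?_)).integrableOn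
    have h1 : (0:ℝ) < 1 + ‖v‖ := by positivity
    show ‖‖v‖ ^ 2 * (1 + ‖v‖) ^ (-q)‖ ≤ _
    rw [Real.norm_eq_abs, abs_of_nonneg (by positivity : (0:ℝ) ≤ ‖v‖ ^ 2 * (1 + ‖v‖) ^ (-q))]
    have h2 : ‖v‖ ^ 2 ≤ (1 + ‖v‖) ^ 2 := by nlinarith [norm_nonneg v]
    have h3 : (1 + ‖v‖) ^ (-(q - 2)) = (1 + ‖v‖) ^ (2:ℕ) * (1 + ‖v‖) ^ (-q) := by
      rw [← Real.rpow_natCast (1 + ‖v‖) 2, ← Real.rpow_add h1]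
      norm_num
      ring_nf
    rw [h3]
    exact mul_le_mul_of_nonneg_right h2 (Real.rpow_nonneg h1.le _)
  have htail : ∫ v in (Metric.ball (0:E3) R)ᶜ, ‖v‖ ^ 2 * g v
      ≤ M * (kap * (R ^ (5 - q) / (q - 5))) := by
    calc ∫ v in (Metric.ball (0:E3) R)ᶜ, ‖v‖ ^ 2 * g v
        ≤ ∫ v in (Metric.ball (0:E3) R)ᶜ, M * (‖v‖ ^ 2 * (1 + ‖v‖) ^ (-q)) := by
          refine setIntegral_mono_on hI2.integrableOn (hIw2.const_mul M)
            measurableSet_ball.compl fun v _ => ?_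
          have := mul_le_mul_of_nonneg_left (hMb v) (sq_nonneg ‖v‖)
          calc ‖v‖ ^ 2 * g v ≤ ‖v‖ ^ 2 * (M * (1 + ‖v‖) ^ (-q)) := this
            _ = M * (‖v‖ ^ 2 * (1 + ‖v‖) ^ (-q)) := by ring
      _ = M * ∫ v in (Metric.ball (0:E3) R)ᶜ, ‖v‖ ^ 2 * (1 + ‖v‖) ^ (-q) :=
          integral_const_mul _ _
      _ ≤ M * (kap * (R ^ (5 - q) / (q - 5))) :=
          mul_le_mul_of_nonneg_left (tail_weight_bound hq hR) hM0
  have hRpow : R ^ (5 - q) = X ^ ((5 - q) / 2) := by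
    rw [hRdef, Real.sqrt_eq_rpow, ← Real.rpow_mul hX.le,
        show (1/2:ℝ) * (5 - q) = (5 - q) / 2 by ring]
  have hXρ : X * dens g ≤ M * kap / (q - 5) * X ^ ((5 - q) / 2) := by
    have h0 : 2 * (X * dens g) = dens g * (3 * temp g + ‖u‖ ^ 2) := by
      simp only [hXdef]; ring
    have := hsplit
    rw [hmom] at this
    have h1 : X * dens g ≤ M * (kap * (R ^ (5 - q) / (q - 5))) := by linarith
    rw [hRpow] at h1
    calc X * dens g ≤ M * (kap * (X ^ ((5 - q) / 2) / (q - 5))) := h1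
      _ = M * kap / (q - 5) * X ^ ((5 - q) / 2) := by ring
  have hXq : X ^ ((q - 3) / 2) = X * X ^ ((q - 5) / 2) := by
    rw [show (q - 3) / 2 = 1 + (q - 5) / 2 by ring, Real.rpow_add hX, Real.rpow_one]
  have key : dens g * X ^ ((q - 3) / 2) ≤ kap / (q - 5) * M := by
    calc dens g * X ^ ((q - 3) / 2) = (X * dens g) * X ^ ((q - 5) / 2) := by
          rw [hXq]; ring
      _ ≤ (M * kap / (q - 5) * X ^ ((5 - q) / 2)) * X ^ ((q - 5) / 2) :=
          mul_le_mul_of_nonneg_right hXρ (Real.rpow_nonneg hX.le _)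
      _ = M * kap / (q - 5) * (X ^ ((5 - q) / 2) * X ^ ((q - 5) / 2)) := by ring
      _ = kap / (q - 5) * M := by
          rw [← Real.rpow_add hX, show (5 - q) / 2 + (q - 5) / 2 = (0:ℝ) by ring,
              Real.rpow_zero, mul_one]
          ring
  have hexp : (0:ℝ) ≤ (q - 3) / 2 := by linarith
  have hTu : temp g + ‖u‖ ^ 2 ≤ 2 * X := by simp only [hXdef]; nlinarith
  have hmono : (temp g + ‖u‖ ^ 2) ^ ((q - 3) / 2) ≤ (2 * X) ^ ((q - 3) / 2) :=
    Real.rpow_le_rpow (by positivity) hTu hexp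
  have h2X : (2 * X) ^ ((q - 3) / 2) = 2 ^ ((q - 3) / 2) * X ^ ((q - 3) / 2) :=
    Real.mul_rpow (by norm_num) hX.le
  calc dens g * (temp g + ‖u‖ ^ 2) ^ ((q - 3) / 2)
      ≤ dens g * (2 ^ ((q - 3) / 2) * X ^ ((q - 3) / 2)) := by
        rw [← h2X]; exact mul_le_mul_of_nonneg_left hmono hρ.le
    _ = 2 ^ ((q - 3) / 2) * (dens g * X ^ ((q - 3) / 2)) := by ring
    _ ≤ 2 ^ ((q - 3) / 2) * (kap / (q - 5) * M) :=
        mul_le_mul_of_nonneg_left key (by positivity)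
    _ = (2 ^ ((q - 3) / 2) * kap / (q - 5)) * M := by ring

end Aux

/-- Lemma 2.1, second inequality:
`ρ (T + |u|²)^{(q-3)/2} ≤ C_q N_q(g)` for `q > 5` or `0 ≤ q < 3`. -/



theorem density_temp_velocity_lower_bound
    (q : ℝ) (hq : 5 < q ∨ (0 ≤ q ∧ q < 3)) :
    ∃ C > (0 : ℝ), ∀ g : E3 → ℝ,
      Measurable g → (∀ v, 0 ≤ g v) →
      Integrable g → 0 < dens g →
      Integrable (fun v => ‖v‖ ^ 2 * g v) → 0 < temp g →
      ENNReal.ofReal (dens g * (temp g + ‖bulk g‖ ^ 2) ^ ((q - 3) / 2)) ≤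
        ENNReal.ofReal C * Nq q g := by
  have hgen : ∀ C : ℝ, 0 < C →
        (∀ g : E3 → ℝ, Measurable g → (∀ v, 0 ≤ g v) → Integrable g → 0 < dens g →
          Integrable (fun v => ‖v‖ ^ 2 * g v) → 0 < temp g →
          ∀ M : ℝ, 0 ≤ M → (∀ v, g v ≤ M * (1 + ‖v‖) ^ (-q)) →
            dens g * (temp g + ‖bulk g‖ ^ 2) ^ ((q - 3) / 2) ≤ C * M) →
        ∃ C > (0 : ℝ), ∀ g : E3 → ℝ,
          Measurable g → (∀ v, 0 ≤ g v) →
          Integrable g → 0 < dens g →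
          Integrable (fun v => ‖v‖ ^ 2 * g v) → 0 < temp g →
          ENNReal.ofReal (dens g * (temp g + ‖bulk g‖ ^ 2) ^ ((q - 3) / 2)) ≤
            ENNReal.ofReal C * Nq q g := by
      intro C hC h
      refine ⟨C, hC, fun g hgm hg0 hI1 hρ hI2 hT => ?_⟩
      by_cases hN : Nq q g = ⊤
      · rw [hN, ENNReal.mul_top (by simp [ENNReal.ofReal_eq_zero]; linarith)]
        exact le_top
      set M := (Nq q g).toReal with hM
      have hM0 : 0 ≤ M := ENNReal.toReal_nonneg
      have hMb : ∀ v, g v ≤ M * (1 + ‖v‖) ^ (-q) := by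
        intro v
        have h1 : ENNReal.ofReal ((1 + ‖v‖) ^ q * g v) ≤ Nq q g :=
          le_iSup (fun v : E3 => ENNReal.ofReal ((1 + ‖v‖) ^ q * g v)) v
        have h2 : (1 + ‖v‖) ^ q * g v ≤ M :=
          (ENNReal.ofReal_le_iff_le_toReal hN).1 h1
        have hp : (0:ℝ) < (1 + ‖v‖) ^ q := Real.rpow_pos_of_pos (by positivity) q
        rw [Real.rpow_neg (by positivity), ← div_eq_mul_inv, le_div_iff₀ hp, mul_comm]
        exact h2
      calc ENNReal.ofReal (dens g * (temp g + ‖bulk g‖ ^ 2) ^ ((q - 3) / 2))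
          ≤ ENNReal.ofReal (C * M) :=
            ENNReal.ofReal_le_ofReal (h g hgm hg0 hI1 hρ hI2 hT M hM0 hMb)
        _ = ENNReal.ofReal C * ENNReal.ofReal M := ENNReal.ofReal_mul hC.le
        _ = ENNReal.ofReal C * Nq q g := by rw [hM, ENNReal.ofReal_toReal hN]
  obtain hq5 | ⟨hq0, hq3⟩ := hq
  · refine hgen (2 ^ ((q - 3) / 2) * kap / (q - 5)) ?_ ?_
    · have := kap_pos
      have h2 : (0:ℝ) < 2 ^ ((q - 3) / 2) := Real.rpow_pos_of_pos (by norm_num) _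
      have h5 : (0:ℝ) < q - 5 := by linarith
      positivity
    · intro g hgm hg0 hI1 hρ hI2 hT M hM0 hMb
      exact case_gt5 q hq5 g hgm hg0 hI1 hρ hI2 hT M hM0 hMb
  · refine hgen (2 * kap * 6 ^ ((3 - q) / 2) / (3 - q)) ?_ ?_
    · have := kap_pos
      have h6 : (0:ℝ) < 6 ^ ((3 - q) / 2) := Real.rpow_pos_of_pos (by norm_num) _
      have h3 : (0:ℝ) < 3 - q := by linarith
      positivity
    · intro g hgm hg0 hI1 hρ hI2 hT M hM0 hMb
      exact case_lt3 q hq0 hq3 g hgm hg0 hI1 hρ hI2 hT M hM0 hMb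
end

section
/- Let ν ∈ (−1/2,1) and set C_{ν1} = min{1−ν, 1+2ν} and C_{ν2} = max{1−ν, 1+2ν}. Then for every nonnegative measurable g : ℝ³ → ℝ with 0 < ρ < ∞ and finite second moment ∫|v|²g(v)dv < ∞, the matrix inequalities C_{ν1}·T·Id ⪯ 𝒯_ν ⪯ C_{ν2}·T·Id hold in the sense of the positive semidefinite (Loewner) order on 3×3 symmetric matrices. -/
open MeasureTheory Real Matrix ENNReal

section AuxLemmas

open Finset

lemma E3_normsq (x : E3) : ‖x‖ ^ 2 = ∑ i, x i ^ 2 := by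
  rw [EuclideanSpace.norm_eq, Real.sq_sqrt (by positivity)]
  simp [Real.norm_eq_abs, sq_abs]

lemma E3_coord_abs_le (x : E3) (i : Fin 3) : |x i| ≤ ‖x‖ := by
  have h : x i ^ 2 ≤ ‖x‖ ^ 2 := by
    rw [E3_normsq]
    exact Finset.single_le_sum (f := fun j => x j ^ 2) (fun j _ => sq_nonneg _)
      (Finset.mem_univ i)
  calc |x i| = Real.sqrt (x i ^ 2) := (Real.sqrt_sq_eq_abs _).symm
    _ ≤ Real.sqrt (‖x‖ ^ 2) := Real.sqrt_le_sqrt h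
    _ = ‖x‖ := Real.sqrt_sq (norm_nonneg _)

lemma E3_coord_measurable (u : E3) (i : Fin 3) :
    Measurable fun v : E3 => (v - u) i := by
  have : (fun v : E3 => (v - u) i) = fun v : E3 => v i - u i := rfl
  rw [this]
  exact ((measurable_pi_apply i).comp (WithLp.measurable_ofLp 2 _)).sub measurable_const

lemma integrable_normsq_shift {g : E3 → ℝ} (hmeas : Measurable g) (hnn : ∀ v, 0 ≤ g v)
    (hint : Integrable g) (hmom : Integrable fun v => ‖v‖ ^ 2 * g v) (u : E3) :
    Integrable fun v => ‖v - u‖ ^ 2 * g v := by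
  have hb : Integrable fun v => 2 * (‖v‖ ^ 2 * g v) + 2 * ‖u‖ ^ 2 * g v :=
    (hmom.const_mul 2).add (hint.const_mul _)
  refine hb.mono' ?_ (Filter.Eventually.of_forall fun v => ?_)
  · exact (((measurable_id.sub measurable_const).norm.pow_const 2).mul hmeas).aestronglyMeasurable
  · have h1 : ‖v - u‖ ≤ ‖v‖ + ‖u‖ := norm_sub_le _ _
    have h2 : (0:ℝ) ≤ ‖v - u‖ := norm_nonneg _
    rw [Real.norm_eq_abs,
      abs_of_nonneg (mul_nonneg (pow_nonneg (norm_nonneg _) 2) (hnn v))]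
    have h3 : ‖v - u‖ ^ 2 ≤ 2 * ‖v‖ ^ 2 + 2 * ‖u‖ ^ 2 := by
      have := pow_le_pow_left₀ h2 h1 2
      nlinarith [sq_nonneg (‖v‖ - ‖u‖)]
    calc ‖v - u‖ ^ 2 * g v ≤ (2 * ‖v‖ ^ 2 + 2 * ‖u‖ ^ 2) * g v :=
        mul_le_mul_of_nonneg_right h3 (hnn v)
      _ = 2 * (‖v‖ ^ 2 * g v) + 2 * ‖u‖ ^ 2 * g v := by ring

lemma integrable_coord_coord {g : E3 → ℝ} (hmeas : Measurable g) (hnn : ∀ v, 0 ≤ g v)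
    (hint : Integrable g) (hmom : Integrable fun v => ‖v‖ ^ 2 * g v) (u : E3) (i j : Fin 3) :
    Integrable fun v => (v - u) i * (v - u) j * g v := by
  refine (integrable_normsq_shift hmeas hnn hint hmom u).mono' ?_
    (Filter.Eventually.of_forall fun v => ?_)
  · exact (((E3_coord_measurable u i).mul (E3_coord_measurable u j)).mul hmeas).aestronglyMeasurable
  · have h1 : |(v - u) i| ≤ ‖v - u‖ := E3_coord_abs_le _ i
    have h2 : |(v - u) j| ≤ ‖v - u‖ := E3_coord_abs_le _ j
    have h3 : (0:ℝ) ≤ g v := hnn v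
    rw [Real.norm_eq_abs, abs_mul, abs_mul, abs_of_nonneg h3]
    have h4 : |(v - u) i| * |(v - u) j| ≤ ‖v - u‖ * ‖v - u‖ :=
      mul_le_mul h1 h2 (abs_nonneg _) (norm_nonneg _)
    calc |(v - u) i| * |(v - u) j| * g v ≤ ‖v - u‖ * ‖v - u‖ * g v :=
        mul_le_mul_of_nonneg_right h4 h3
      _ = ‖v - u‖ ^ 2 * g v := by ring

lemma stress_quadform {g : E3 → ℝ} (hmeas : Measurable g) (hnn : ∀ v, 0 ≤ g v)
    (hint : Integrable g) (hmom : Integrable fun v => ‖v‖ ^ 2 * g v) (x : Fin 3 → ℝ) :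
    x ⬝ᵥ (stress g *ᵥ x) =
      (dens g)⁻¹ * ∫ v, (∑ i, x i * (v - bulk g) i) ^ 2 * g v := by
  set u := bulk g with hu
  have hcc := integrable_coord_coord hmeas hnn hint hmom u
  have key : (∫ v, (∑ i, x i * (v - u) i) ^ 2 * g v)
      = ∑ i, ∑ j, (x i * x j) * ∫ v, (v - u) i * (v - u) j * g v := by
    have hpt : ∀ v, (∑ i, x i * (v - u) i) ^ 2 * g v
        = ∑ i, ∑ j, (x i * x j) * ((v - u) i * (v - u) j * g v) := by
      intro v
      rw [sq, Finset.sum_mul_sum, Finset.sum_mul]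
      refine Finset.sum_congr rfl fun i _ => ?_
      rw [Finset.sum_mul]
      exact Finset.sum_congr rfl fun j _ => by ring
    simp_rw [hpt]
    rw [integral_finset_sum _ (fun i _ => integrable_finset_sum _
      (fun j _ => (hcc i j).const_mul _))]
    refine Finset.sum_congr rfl fun i _ => ?_
    rw [integral_finset_sum _ (fun j _ => (hcc i j).const_mul _)]
    exact Finset.sum_congr rfl fun j _ => MeasureTheory.integral_const_mul _ _
  simp only [dotProduct, mulVec, stress, Matrix.of_apply]
  rw [key, Finset.mul_sum]
  refine Finset.sum_congr rfl fun i _ => ?_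
  rw [Finset.mul_sum, Finset.mul_sum]
  refine Finset.sum_congr rfl fun j _ => ?_
  ring

lemma stress_qf_nonneg {g : E3 → ℝ} (hmeas : Measurable g) (hnn : ∀ v, 0 ≤ g v)
    (hint : Integrable g) (hdens : 0 < dens g)
    (hmom : Integrable fun v => ‖v‖ ^ 2 * g v) (x : Fin 3 → ℝ) :
    0 ≤ x ⬝ᵥ (stress g *ᵥ x) := by
  rw [stress_quadform hmeas hnn hint hmom x]
  have : 0 ≤ ∫ v, (∑ i, x i * (v - bulk g) i) ^ 2 * g v :=
    integral_nonneg fun v => mul_nonneg (sq_nonneg _) (hnn v)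
  positivity

lemma stress_qf_le {g : E3 → ℝ} (hmeas : Measurable g) (hnn : ∀ v, 0 ≤ g v)
    (hint : Integrable g) (hdens : 0 < dens g)
    (hmom : Integrable fun v => ‖v‖ ^ 2 * g v) (x : Fin 3 → ℝ) :
    x ⬝ᵥ (stress g *ᵥ x) ≤ 3 * temp g * (x ⬝ᵥ x) := by
  set u := bulk g with hu
  set C : ℝ := ∑ i, x i ^ 2 with hC
  have hxx : x ⬝ᵥ x = C := by
    simp only [dotProduct, hC, sq]
  have hCs : 0 ≤ C := Finset.sum_nonneg fun i _ => sq_nonneg _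
  have hIns := integrable_normsq_shift hmeas hnn hint hmom u
  have hbound : ∀ v, (∑ i, x i * (v - u) i) ^ 2 * g v ≤ C * (‖v - u‖ ^ 2 * g v) := by
    intro v
    have hcs : (∑ i, x i * (v - u) i) ^ 2 ≤ (∑ i, x i ^ 2) * ∑ i, ((v - u) i) ^ 2 :=
      Finset.sum_mul_sq_le_sq_mul_sq Finset.univ (fun i => x i) (fun i => (v - u) i)
    rw [E3_normsq]
    calc (∑ i, x i * (v - u) i) ^ 2 * g v
        ≤ ((∑ i, x i ^ 2) * ∑ i, ((v - u) i) ^ 2) * g v :=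
          mul_le_mul_of_nonneg_right hcs (hnn v)
      _ = C * ((∑ i, ((v - u) i) ^ 2) * g v) := by rw [hC]; ring
  have hI1 : Integrable fun v => (∑ i, x i * (v - u) i) ^ 2 * g v := by
    refine (hIns.const_mul C).mono' ?_ (Filter.Eventually.of_forall fun v => ?_)
    · refine Measurable.aestronglyMeasurable ?_
      exact ((Finset.measurable_sum _ fun i _ =>
        (E3_coord_measurable u i).const_mul (x i)).pow_const 2).mul hmeas
    · rw [Real.norm_eq_abs, abs_of_nonneg (mul_nonneg (sq_nonneg _) (hnn v))]
      exact hbound v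
  have hInt_le : (∫ v, (∑ i, x i * (v - u) i) ^ 2 * g v)
      ≤ C * ∫ v, ‖v - u‖ ^ 2 * g v := by
    rw [← MeasureTheory.integral_const_mul]
    exact integral_mono hI1 (hIns.const_mul C) hbound
  rw [stress_quadform hmeas hnn hint hmom x, hxx]
  have htemp : 3 * temp g = (dens g)⁻¹ * ∫ v, ‖v - u‖ ^ 2 * g v := by
    rw [temp]
    field_simp
    ring
  rw [htemp]
  calc (dens g)⁻¹ * ∫ v, (∑ i, x i * (v - u) i) ^ 2 * g v
      ≤ (dens g)⁻¹ * (C * ∫ v, ‖v - u‖ ^ 2 * g v) :=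
        mul_le_mul_of_nonneg_left hInt_le (inv_nonneg.mpr hdens.le)
    _ = (dens g)⁻¹ * (∫ v, ‖v - u‖ ^ 2 * g v) * C := by ring

lemma isHermitian_rsmul {n : Type*} {A : Matrix n n ℝ} (c : ℝ) (h : A.IsHermitian) :
    (c • A).IsHermitian := by
  show (c • A)ᴴ = c • A
  rw [Matrix.conjTranspose_smul, star_trivial, h]

lemma stress_isHermitian (g : E3 → ℝ) : (stress g).IsHermitian := by
  show (stress g)ᴴ = stress g
  ext i j
  simp only [Matrix.conjTranspose_apply, stress, Matrix.of_apply, star_trivial]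
  congr 2
  funext v
  ring

lemma temp_nonneg {g : E3 → ℝ} (hnn : ∀ v, 0 ≤ g v) (hdens : 0 < dens g) :
    0 ≤ temp g := by
  rw [temp]
  have : 0 ≤ ∫ v, ‖v - bulk g‖ ^ 2 * g v :=
    integral_nonneg fun v => mul_nonneg (sq_nonneg _) (hnn v)
  positivity

end AuxLemmas

/-- Lemma 2.2: `C_{ν1} T Id ⪯ 𝒯_ν ⪯ C_{ν2} T Id` in the Loewner order. -/
theorem tempTensor_loewner_bounds
    (ν : ℝ) (hν1 : -(1 / 2 : ℝ) < ν) (hν2 : ν < 1)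
    (g : E3 → ℝ) (hmeas : Measurable g) (hnn : ∀ v, 0 ≤ g v)
    (hint : Integrable g) (hdens : 0 < dens g)
    (hmom : Integrable fun v => ‖v‖ ^ 2 * g v) :
    (tempTensor g ν -
      (min (1 - ν) (1 + 2 * ν) * temp g) • (1 : Matrix (Fin 3) (Fin 3) ℝ)).PosSemidef ∧
    ((max (1 - ν) (1 + 2 * ν) * temp g) • (1 : Matrix (Fin 3) (Fin 3) ℝ) -
      tempTensor g ν).PosSemidef := by
  have hT := temp_nonneg hnn hdens
  have hQ0 := stress_qf_nonneg hmeas hnn hint hdens hmom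
  have hQle := stress_qf_le hmeas hnn hint hdens hmom
  have hxx : ∀ x : Fin 3 → ℝ, 0 ≤ x ⬝ᵥ x :=
    fun x => Finset.sum_nonneg fun i _ => mul_self_nonneg _
  have hherm : (tempTensor g ν).IsHermitian :=
    (isHermitian_rsmul _ Matrix.isHermitian_one).add
      (isHermitian_rsmul _ (stress_isHermitian g))
  have expand : ∀ (c : ℝ) (x : Fin 3 → ℝ),
      x ⬝ᵥ ((tempTensor g ν - c • (1 : Matrix (Fin 3) (Fin 3) ℝ)) *ᵥ x)
        = ((1 - ν) * temp g - c) * (x ⬝ᵥ x) + ν * (x ⬝ᵥ (stress g *ᵥ x)) := by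
    intro c x
    simp only [tempTensor, Matrix.sub_mulVec, Matrix.add_mulVec, Matrix.smul_mulVec,
      Matrix.one_mulVec, dotProduct_sub, dotProduct_add, dotProduct_smul, smul_eq_mul]
    ring
  have expand2 : ∀ (c : ℝ) (x : Fin 3 → ℝ),
      x ⬝ᵥ ((c • (1 : Matrix (Fin 3) (Fin 3) ℝ) - tempTensor g ν) *ᵥ x)
        = (c - (1 - ν) * temp g) * (x ⬝ᵥ x) - ν * (x ⬝ᵥ (stress g *ᵥ x)) := by
    intro c x
    simp only [tempTensor, Matrix.sub_mulVec, Matrix.add_mulVec, Matrix.smul_mulVec,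
      Matrix.one_mulVec, dotProduct_sub, dotProduct_add, dotProduct_smul, smul_eq_mul]
    ring
  constructor
  · refine Matrix.PosSemidef.of_dotProduct_mulVec_nonneg (hherm.sub (isHermitian_rsmul _ Matrix.isHermitian_one)) fun x => ?_
    rw [show star x = x from funext fun i => star_trivial _, expand]
    rcases le_or_gt 0 ν with hν | hν
    · rw [min_eq_left (by linarith : (1:ℝ) - ν ≤ 1 + 2 * ν)]
      have := hQ0 x
      have := hxx x
      nlinarith
    · rw [min_eq_right (by linarith : (1:ℝ) + 2 * ν ≤ 1 - ν)]
      have h1 := hQle x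
      have := hxx x
      nlinarith
  · refine Matrix.PosSemidef.of_dotProduct_mulVec_nonneg ((isHermitian_rsmul _ Matrix.isHermitian_one).sub hherm) fun x => ?_
    rw [show star x = x from funext fun i => star_trivial _, expand2]
    rcases le_or_gt 0 ν with hν | hν
    · rw [max_eq_right (by linarith : (1:ℝ) - ν ≤ 1 + 2 * ν)]
      have h1 := hQle x
      have := hxx x
      nlinarith
    · rw [max_eq_left (by linarith : (1:ℝ) + 2 * ν ≤ 1 - ν)]
      have := hQ0 x
      have := hxx x
      nlinarith
end

section
/- Let ν ∈ (−1/2,1) and set C_{ν1} = min{1−ν, 1+2ν} and C_{ν2} = max{1−ν, 1+2ν}. Then for every nonnegative measurable g : ℝ³ → ℝ with 0 < ρ < ∞, finite second moment ∫|v|²g(v)dv < ∞, and 0 < T < ∞, the temperature tensor 𝒯_ν is invertible with C_{ν2}^{−1}·T^{−1}·Id ⪯ 𝒯_ν^{−1} ⪯ C_{ν1}^{−1}·T^{−1}·Id in the positive semidefinite (Loewner) order, and C_{ν1}³T³ ≤ det 𝒯_ν ≤ C_{ν2}³T³. -/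
open MeasureTheory Real Matrix ENNReal

section AuxESBGK

open MeasureTheory Matrix

lemma key3 (A : Matrix (Fin 3) (Fin 3) ℝ) (hA : A.IsHermitian) (a b : ℝ) (ha : 0 < a)
    (hq1 : ∀ x : Fin 3 → ℝ, a * (x ⬝ᵥ x) ≤ x ⬝ᵥ (A *ᵥ x))
    (hq2 : ∀ x : Fin 3 → ℝ, x ⬝ᵥ (A *ᵥ x) ≤ b * (x ⬝ᵥ x)) :
    IsUnit A ∧ (A⁻¹ - b⁻¹ • (1 : Matrix (Fin 3) (Fin 3) ℝ)).PosSemidef ∧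
      (a⁻¹ • (1 : Matrix (Fin 3) (Fin 3) ℝ) - A⁻¹).PosSemidef ∧
      a ^ 3 ≤ A.det ∧ A.det ≤ b ^ 3 := by
  classical
  set lam := hA.eigenvalues with hlam
  -- unit dot product of eigenvectors
  have hdot : ∀ i, (⇑(hA.eigenvectorBasis i) : Fin 3 → ℝ) ⬝ᵥ ⇑(hA.eigenvectorBasis i) = 1 := by
    intro i
    have hn : ‖hA.eigenvectorBasis i‖ = 1 := hA.eigenvectorBasis.orthonormal.1 i
    have := congrArg (· ^ 2) hn
    rw [EuclideanSpace.norm_eq] at this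
    simp only [one_pow] at this
    rw [Real.sq_sqrt (by positivity)] at this
    simpa [dotProduct, pow_two] using this
  have hlam_eval : ∀ i, lam i = (⇑(hA.eigenvectorBasis i) : Fin 3 → ℝ) ⬝ᵥ (A *ᵥ ⇑(hA.eigenvectorBasis i)) := by
    intro i
    simpa [star_trivial] using hA.eigenvalues_eq i
  have hlam_lb : ∀ i, a ≤ lam i := fun i => by
    have := hq1 (⇑(hA.eigenvectorBasis i)); rw [hdot i, mul_one] at this
    rw [hlam_eval i]; exact this
  have hlam_ub : ∀ i, lam i ≤ b := fun i => by
    have := hq2 (⇑(hA.eigenvectorBasis i)); rw [hdot i, mul_one] at this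
    rw [hlam_eval i]; exact this
  have hb : 0 < b := lt_of_lt_of_le ha (le_trans (hlam_lb 0) (hlam_ub 0))
  have hlam_pos : ∀ i, 0 < lam i := fun i => lt_of_lt_of_le ha (hlam_lb i)
  have hdet : A.det = ∏ i, lam i := by
    simpa using hA.det_eq_prod_eigenvalues
  have hdet_lb : a ^ 3 ≤ A.det := by
    rw [hdet]
    calc a ^ 3 = ∏ _i : Fin 3, a := by simp [pow_succ]
    _ ≤ ∏ i, lam i := Finset.prod_le_prod (fun i _ => le_of_lt ha) (fun i _ => hlam_lb i)
  have hdet_ub : A.det ≤ b ^ 3 := by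
    rw [hdet]
    calc ∏ i, lam i ≤ ∏ _i : Fin 3, b :=
          Finset.prod_le_prod (fun i _ => (hlam_pos i).le) (fun i _ => hlam_ub i)
    _ = b ^ 3 := by simp [pow_succ]
  have hdetpos : 0 < A.det := lt_of_lt_of_le (by positivity) hdet_lb
  have hunit : IsUnit A := (Matrix.isUnit_iff_isUnit_det A).2 (isUnit_iff_ne_zero.2 hdetpos.ne')
  -- spectral decomposition
  set U : Matrix (Fin 3) (Fin 3) ℝ := (hA.eigenvectorUnitary : Matrix (Fin 3) (Fin 3) ℝ) with hU
  have hUU : U * star U = 1 := (Matrix.mem_unitaryGroup_iff).mp hA.eigenvectorUnitary.2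
  have hUU' : star U * U = 1 := (Matrix.mem_unitaryGroup_iff').mp hA.eigenvectorUnitary.2
  have hspec : A = U * Matrix.diagonal lam * star U := by
    have := hA.spectral_theorem
    simpa [Function.comp] using this
  have hinv : A⁻¹ = U * Matrix.diagonal (fun i => (lam i)⁻¹) * star U := by
    apply Matrix.inv_eq_right_inv
    rw [hspec]
    calc U * Matrix.diagonal lam * star U * (U * Matrix.diagonal (fun i => (lam i)⁻¹) * star U)
        = U * (Matrix.diagonal lam * (star U * U) * Matrix.diagonal (fun i => (lam i)⁻¹)) * star U := by
          noncomm_ring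
      _ = 1 := by
          rw [hUU', mul_one, Matrix.diagonal_mul_diagonal]
          rw [show (fun i => lam i * (lam i)⁻¹) = fun _ : Fin 3 => (1:ℝ) from
            funext fun i => mul_inv_cancel₀ (hlam_pos i).ne', Matrix.diagonal_one, mul_one, hUU]
  have hconj : ∀ c : ℝ, c • (1 : Matrix (Fin 3) (Fin 3) ℝ) = U * Matrix.diagonal (fun _ => c) * star U := by
    intro c
    rw [show Matrix.diagonal (fun _ : Fin 3 => c) = c • 1 by simp [Matrix.smul_one_eq_diagonal]]
    rw [Matrix.mul_smul, mul_one, Matrix.smul_mul, hUU]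
  have hdiagsub : ∀ d e : Fin 3 → ℝ,
      U * Matrix.diagonal d * star U - U * Matrix.diagonal e * star U
        = U * Matrix.diagonal (d - e) * star U := by
    intro d e
    rw [show (d - e) = fun i => d i - e i from rfl, ← Matrix.diagonal_sub]
    noncomm_ring
  have hpsd : ∀ d : Fin 3 → ℝ, 0 ≤ d → (U * Matrix.diagonal d * star U).PosSemidef := by
    intro d hd
    have := (Matrix.PosSemidef.diagonal hd).mul_mul_conjTranspose_same U
    simpa [Matrix.star_eq_conjTranspose] using this
  refine ⟨hunit, ?_, ?_, hdet_lb, hdet_ub⟩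
  · rw [hinv, hconj b⁻¹, hdiagsub]
    exact hpsd _ (fun i => by
      have : 0 ≤ (lam i)⁻¹ - b⁻¹ :=
        sub_nonneg.mpr (inv_anti₀ (hlam_pos i) (hlam_ub i))
      simpa using this)
  · rw [hinv, hconj a⁻¹, hdiagsub]
    exact hpsd _ (fun i => by
      have : 0 ≤ a⁻¹ - (lam i)⁻¹ :=
        sub_nonneg.mpr (inv_anti₀ ha (hlam_lb i))
      simpa using this)

lemma comp_abs_le_norm (w : E3) (i : Fin 3) : |w i| ≤ ‖w‖ := by
  rw [EuclideanSpace.norm_eq, ← Real.sqrt_sq_eq_abs]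
  apply Real.sqrt_le_sqrt
  have := Finset.single_le_sum (f := fun k => ‖w k‖ ^ 2) (fun k _ => sq_nonneg _)
    (Finset.mem_univ i)
  simpa [Real.norm_eq_abs, sq_abs] using this

lemma norm_sq_eq_sum (w : E3) : ‖w‖ ^ 2 = ∑ i, w i ^ 2 := by
  rw [EuclideanSpace.norm_eq, Real.sq_sqrt (by positivity)]
  simp [Real.norm_eq_abs, sq_abs]

end AuxESBGK

/-- Corollary 2.3: Loewner bounds on `𝒯_ν⁻¹` and bounds on `det 𝒯_ν`. -/
theorem tempTensor_inv_det_bounds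
    (ν : ℝ) (hν1 : -(1 / 2 : ℝ) < ν) (hν2 : ν < 1)
    (g : E3 → ℝ) (hmeas : Measurable g) (hnn : ∀ v, 0 ≤ g v)
    (hint : Integrable g) (hdens : 0 < dens g)
    (hmom : Integrable fun v => ‖v‖ ^ 2 * g v) (htemp : 0 < temp g) :
    IsUnit (tempTensor g ν) ∧
    ((tempTensor g ν)⁻¹ -
      ((max (1 - ν) (1 + 2 * ν))⁻¹ * (temp g)⁻¹) • (1 : Matrix (Fin 3) (Fin 3) ℝ)).PosSemidef ∧
    (((min (1 - ν) (1 + 2 * ν))⁻¹ * (temp g)⁻¹) • (1 : Matrix (Fin 3) (Fin 3) ℝ) -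
      (tempTensor g ν)⁻¹).PosSemidef ∧
    (min (1 - ν) (1 + 2 * ν)) ^ 3 * temp g ^ 3 ≤ (tempTensor g ν).det ∧
    (tempTensor g ν).det ≤ (max (1 - ν) (1 + 2 * ν)) ^ 3 * temp g ^ 3 := by
  classical
  set u := bulk g with hu
  set T := temp g with hT
  set ρ := dens g with hρ
  set C1 := min (1 - ν) (1 + 2 * ν) with hC1
  set C2 := max (1 - ν) (1 + 2 * ν) with hC2
  have hC1pos : 0 < C1 := lt_min (by linarith) (by linarith)
  have hC2C1 : C1 ≤ C2 := min_le_max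
  -- integrability of |v-u|^2 g
  have hcont_w : ∀ i : Fin 3, Continuous (fun v : E3 => (v - u) i) := fun i =>
    (EuclideanSpace.proj i).continuous.comp (continuous_id.sub continuous_const)
  have h1 : Integrable (fun v : E3 => ‖v - u‖ ^ 2 * g v) := by
    refine Integrable.mono' ((hmom.const_mul 2).add (hint.const_mul (2 * ‖u‖ ^ 2))) ?_ ?_
    · exact (((continuous_id.sub continuous_const).norm.pow 2).aestronglyMeasurable.mul
        hmeas.aestronglyMeasurable)
    · refine Filter.Eventually.of_forall fun v => ?_
      have h2 : ‖v - u‖ ≤ ‖v‖ + ‖u‖ := norm_sub_le _ _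
      have h3 : 0 ≤ g v := hnn v
      have h4 : (0:ℝ) ≤ ‖v - u‖ := norm_nonneg _
      rw [Real.norm_eq_abs, abs_of_nonneg (by positivity)]
      have h5 : ‖v - u‖ ^ 2 ≤ 2 * ‖v‖ ^ 2 + 2 * ‖u‖ ^ 2 := by
        nlinarith [mul_self_le_mul_self h4 h2, sq_nonneg (‖v‖ - ‖u‖)]
      calc ‖v - u‖ ^ 2 * g v ≤ (2 * ‖v‖ ^ 2 + 2 * ‖u‖ ^ 2) * g v := mul_le_mul_of_nonneg_right h5 h3
        _ = 2 * (‖v‖ ^ 2 * g v) + 2 * ‖u‖ ^ 2 * g v := by ring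
  have hIint : ∀ i j : Fin 3, Integrable (fun v : E3 => (v - u) i * (v - u) j * g v) := by
    intro i j
    refine Integrable.mono' h1 (((hcont_w i).mul (hcont_w j)).aestronglyMeasurable.mul
      hmeas.aestronglyMeasurable) (Filter.Eventually.of_forall fun v => ?_)
    have h3 : 0 ≤ g v := hnn v
    rw [Real.norm_eq_abs, abs_mul, abs_of_nonneg h3]
    refine mul_le_mul_of_nonneg_right ?_ h3
    rw [abs_mul]
    calc |(v - u) i| * |(v - u) j| ≤ ‖v - u‖ * ‖v - u‖ :=
          mul_le_mul (comp_abs_le_norm _ _) (comp_abs_le_norm _ _) (abs_nonneg _) (norm_nonneg _)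
      _ = ‖v - u‖ ^ 2 := (sq ‖v - u‖).symm
  have hρ0 : (0:ℝ) < ρ := hdens
  have hmean : ∫ v : E3, ‖v - u‖ ^ 2 * g v = 3 * ρ * T := by
    have h0 : T = (3 * ρ)⁻¹ * ∫ v : E3, ‖v - u‖ ^ 2 * g v := rfl
    rw [h0]; field_simp
  have hquad : ∀ x : Fin 3 → ℝ,
      x ⬝ᵥ (stress g *ᵥ x) = ρ⁻¹ * ∫ v : E3, (∑ i, x i * (v - u) i) ^ 2 * g v := by
    intro x
    have hpt : ∀ v : E3, (∑ i, x i * (v - u) i) ^ 2 * g v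
        = ∑ i, ∑ j, x i * x j * ((v - u) i * (v - u) j * g v) := by
      intro v
      rw [sq, Finset.sum_mul_sum, Finset.sum_mul]
      refine Finset.sum_congr rfl fun i _ => ?_
      rw [Finset.sum_mul]
      exact Finset.sum_congr rfl fun j _ => by ring
    have hInt : ∫ v : E3, (∑ i, x i * (v - u) i) ^ 2 * g v
        = ∑ i, ∑ j, x i * x j * ∫ v : E3, (v - u) i * (v - u) j * g v := by
      rw [MeasureTheory.integral_congr_ae (Filter.Eventually.of_forall hpt)]
      rw [MeasureTheory.integral_finset_sum _ (fun i _ =>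
        MeasureTheory.integrable_finset_sum _ (fun j _ => (hIint i j).const_mul _))]
      refine Finset.sum_congr rfl fun i _ => ?_
      rw [MeasureTheory.integral_finset_sum _ (fun j _ => (hIint i j).const_mul _)]
      exact Finset.sum_congr rfl fun j _ => MeasureTheory.integral_const_mul _ _
    rw [hInt, Finset.mul_sum]
    simp only [dotProduct, Matrix.mulVec, dotProduct, stress, Matrix.of_apply,
      Finset.mul_sum]
    refine Finset.sum_congr rfl fun i _ => ?_
    refine Finset.sum_congr rfl fun j _ => by ring
  have hq_nonneg : ∀ x : Fin 3 → ℝ, 0 ≤ x ⬝ᵥ (stress g *ᵥ x) := by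
    intro x
    rw [hquad x]
    refine mul_nonneg (inv_nonneg.mpr hρ0.le) (MeasureTheory.integral_nonneg fun v => ?_)
    exact mul_nonneg (sq_nonneg _) (hnn v)
  have hxx_eq : ∀ x : Fin 3 → ℝ, x ⬝ᵥ x = ∑ i, x i ^ 2 := by
    intro x; simp [dotProduct, sq]
  have hxx_nonneg : ∀ x : Fin 3 → ℝ, 0 ≤ x ⬝ᵥ x := by
    intro x; rw [hxx_eq]; positivity
  have hq_ub : ∀ x : Fin 3 → ℝ, x ⬝ᵥ (stress g *ᵥ x) ≤ 3 * T * (x ⬝ᵥ x) := by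
    intro x
    have hptle : ∀ v : E3, (∑ i, x i * (v - u) i) ^ 2 * g v ≤ (x ⬝ᵥ x) * (‖v - u‖ ^ 2 * g v) := by
      intro v
      have hcs : (∑ i, x i * (v - u) i) ^ 2 ≤ (∑ i, x i ^ 2) * ∑ i, ((v - u) i) ^ 2 :=
        Finset.sum_mul_sq_le_sq_mul_sq _ _ _
      rw [← norm_sq_eq_sum (v - u), ← hxx_eq x] at hcs
      calc (∑ i, x i * (v - u) i) ^ 2 * g v ≤ ((x ⬝ᵥ x) * ‖v - u‖ ^ 2) * g v :=
            mul_le_mul_of_nonneg_right hcs (hnn v)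
        _ = (x ⬝ᵥ x) * (‖v - u‖ ^ 2 * g v) := by ring
    have hsqint : Integrable (fun v : E3 => (∑ i, x i * (v - u) i) ^ 2 * g v) := by
      refine Integrable.mono' (h1.const_mul (x ⬝ᵥ x)) ?_ (Filter.Eventually.of_forall fun v => ?_)
      · exact ((((continuous_finset_sum _ fun i _ => (continuous_const.mul (hcont_w i)))).pow
          2).aestronglyMeasurable.mul hmeas.aestronglyMeasurable)
      · rw [Real.norm_eq_abs, abs_of_nonneg (mul_nonneg (sq_nonneg _) (hnn v))]
        exact hptle v
    have hile : ∫ v : E3, (∑ i, x i * (v - u) i) ^ 2 * g v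
        ≤ ∫ v : E3, (x ⬝ᵥ x) * (‖v - u‖ ^ 2 * g v) :=
      MeasureTheory.integral_mono hsqint (h1.const_mul _) hptle
    rw [MeasureTheory.integral_const_mul, hmean] at hile
    rw [hquad x]
    calc ρ⁻¹ * ∫ v : E3, (∑ i, x i * (v - u) i) ^ 2 * g v
        ≤ ρ⁻¹ * ((x ⬝ᵥ x) * (3 * ρ * T)) := mul_le_mul_of_nonneg_left hile (inv_nonneg.mpr hρ0.le)
      _ = 3 * T * (x ⬝ᵥ x) := by field_simp
  have hherm : (tempTensor g ν).IsHermitian := by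
    have hstress : (stress g).IsHermitian := by
      refine Matrix.IsHermitian.ext fun i j => ?_
      simp only [stress, Matrix.of_apply, star_trivial]
      congr 1
      exact MeasureTheory.integral_congr_ae (Filter.Eventually.of_forall fun v => by ring)
    refine Matrix.IsHermitian.ext fun i j => ?_
    have h2 := hstress.apply j i
    simp only [tempTensor, Matrix.add_apply, Matrix.smul_apply, Matrix.one_apply,
      star_trivial, smul_eq_mul] at *
    rw [h2]
    by_cases hij : i = j <;> simp [hij, eq_comm]
  have htt : ∀ x : Fin 3 → ℝ,
      x ⬝ᵥ (tempTensor g ν *ᵥ x) = (1 - ν) * T * (x ⬝ᵥ x) + ν * (x ⬝ᵥ (stress g *ᵥ x)) := by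
    intro x
    simp only [tempTensor, Matrix.add_mulVec, Matrix.smul_mulVec, Matrix.one_mulVec,
      dotProduct_add, dotProduct_smul, smul_eq_mul, ← hT]
  have hq1 : ∀ x : Fin 3 → ℝ, C1 * T * (x ⬝ᵥ x) ≤ x ⬝ᵥ (tempTensor g ν *ᵥ x) := by
    intro x
    rw [htt x]
    have hX := hxx_nonneg x
    have hq0 := hq_nonneg x
    have hqu := hq_ub x
    rcases le_or_gt 0 ν with hν | hν
    · have hc : C1 ≤ 1 - ν := min_le_left _ _
      nlinarith [mul_nonneg hν hq0, mul_nonneg (mul_nonneg (sub_nonneg.mpr hc) htemp.le) hX]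
    · have hc : C1 ≤ 1 + 2 * ν := min_le_right _ _
      nlinarith [mul_le_mul_of_nonpos_left hqu hν.le,
        mul_nonneg (mul_nonneg (sub_nonneg.mpr hc) htemp.le) hX]
  have hq2 : ∀ x : Fin 3 → ℝ, x ⬝ᵥ (tempTensor g ν *ᵥ x) ≤ C2 * T * (x ⬝ᵥ x) := by
    intro x
    rw [htt x]
    have hX := hxx_nonneg x
    have hq0 := hq_nonneg x
    have hqu := hq_ub x
    rcases le_or_gt 0 ν with hν | hν
    · have hc : 1 + 2 * ν ≤ C2 := le_max_right _ _
      nlinarith [mul_le_mul_of_nonneg_left hqu hν,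
        mul_nonneg (mul_nonneg (sub_nonneg.mpr hc) htemp.le) hX]
    · have hc : 1 - ν ≤ C2 := le_max_left _ _
      nlinarith [mul_nonpos_of_nonpos_of_nonneg hν.le hq0,
        mul_nonneg (mul_nonneg (sub_nonneg.mpr hc) htemp.le) hX]
  have hkey := key3 (tempTensor g ν) hherm (C1 * T) (C2 * T)
    (mul_pos hC1pos htemp) hq1 hq2
  obtain ⟨hk1, hk2, hk3, hk4, hk5⟩ := hkey
  refine ⟨hk1, ?_, ?_, ?_, ?_⟩
  · rwa [mul_inv] at hk2
  · rwa [mul_inv] at hk3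
  · rwa [mul_pow] at hk4
  · rwa [mul_pow] at hk5
end

section
/- Let ν ∈ (−1/2,1), β > 5 and w(v) = (1+|v|)^β. Assume F₀ ≥ 0 is measurable with ∥wF₀∥_{L∞} < ∞ and that there is C₀ > 0 with ∫_{ℝ³} F₀(x−vt,v)dv ≥ C₀ for all t ≥ 0 and x ∈ ℝ³. Let F be a nonnegative mild solution of the ES-BGK equation with initial datum F₀ and let t₁ = (4C_β(ν)∥wF₀∥_{L∞})^{−1} be as in the local L∞ estimate. Then there exists a constant C₁ ≥ 1, depending only on C₀, ν, β and ∥wF₀∥_{L∞}, such that for all 0 ≤ t ≤ t₁ and x ∈ ℝ³: C₁^{−1} ≤ ρ(t,x) ≤ C₁, C₁^{−1} ≤ T(t,x) ≤ C₁, and |u(t,x)| ≤ C₁. -/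
open MeasureTheory Real Matrix ENNReal

section AuxLemmas
open MeasureTheory Real

private lemma int_le_aux {g h : E3 → ℝ} (hg : ∀ v, 0 ≤ g v) (hh : Integrable h)
    (hle : ∀ v, g v ≤ h v) : ∫ v, g v ≤ ∫ v, h v :=
  integral_mono_of_nonneg (Filter.Eventually.of_forall hg) hh (Filter.Eventually.of_forall hle)

private lemma mom_bd (β M : ℝ) (hβ : 5 < β) (g : E3 → ℝ)
    (hnn : ∀ v, 0 ≤ g v) (hbd : ∀ v, g v ≤ 2 * M * (1 + ‖v‖) ^ (-β)) (k : ℕ) (hk : k ≤ 2) :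
    ∫ v, ‖v‖ ^ k * g v ≤ 2 * M * ∫ v : E3, (1 + ‖v‖) ^ ((k : ℝ) - β) := by
  have hint : Integrable (fun v : E3 => (1 + ‖v‖) ^ ((k:ℝ) - β)) := by
    have : ((k:ℝ) - β) = -(β - k) := by ring
    rw [this]
    apply integrable_one_add_norm (μ := volume)
    rw [finrank_euclideanSpace]
    simp only [Fintype.card_fin]
    have : (k : ℝ) ≤ 2 := by exact_mod_cast hk
    push_cast; linarith
  rw [← integral_const_mul]
  apply int_le_aux (fun v => mul_nonneg (by positivity) (hnn v)) (hint.const_mul _)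
  intro v
  have h1 : (0:ℝ) ≤ 1 + ‖v‖ := by positivity
  have h2 : ‖v‖ ^ k * g v ≤ (1 + ‖v‖) ^ k * (2 * M * (1 + ‖v‖) ^ (-β)) := by
    apply mul_le_mul _ (hbd v) (hnn v) (by positivity)
    exact pow_le_pow_left₀ (norm_nonneg v) (by linarith [norm_nonneg v]) k
  refine h2.trans (le_of_eq ?_)
  have h3 : (1 + ‖v‖) ^ ((k:ℝ) - β) = (1 + ‖v‖) ^ ((k:ℝ)) * (1 + ‖v‖) ^ (-β) := by
    rw [← Real.rpow_add (by linarith [norm_nonneg v] : (0:ℝ) < 1 + ‖v‖)]; ring_nf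
  rw [← Real.rpow_natCast (1 + ‖v‖) k, h3]; ring

private lemma int_norm_mul {g : E3 → ℝ} (hmeas : Measurable g) (hnn : ∀ v, 0 ≤ g v)
    (hint : Integrable g) (hmom : Integrable (fun v => ‖v‖^2 * g v)) :
    Integrable (fun v => ‖v‖ * g v) := by
  refine (hint.add hmom).mono' (measurable_norm.mul hmeas).aestronglyMeasurable ?_
  refine Filter.Eventually.of_forall fun v => ?_
  have h0 := hnn v
  have h1 : ‖v‖ ≤ 1 + ‖v‖^2 := by nlinarith [norm_nonneg v]
  rw [Real.norm_eq_abs, abs_of_nonneg (mul_nonneg (norm_nonneg v) h0)]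
  simp only [Pi.add_apply]
  nlinarith [norm_nonneg v]

private lemma int_vec {g : E3 → ℝ} (hmeas : Measurable g) (hnn : ∀ v, 0 ≤ g v)
    (hint : Integrable g) (hmom : Integrable (fun v => ‖v‖^2 * g v)) :
    Integrable (fun v => g v • v) := by
  refine (int_norm_mul hmeas hnn hint hmom).mono'
    (hmeas.smul measurable_id).aestronglyMeasurable ?_
  refine Filter.Eventually.of_forall fun v => ?_
  rw [norm_smul, Real.norm_eq_abs, abs_of_nonneg (hnn v)]
  rw [mul_comm]

private lemma int_Q {g : E3 → ℝ} (hmeas : Measurable g) (hnn : ∀ v, 0 ≤ g v)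
    (hint : Integrable g) (hmom : Integrable (fun v => ‖v‖^2 * g v)) (u : E3) :
    Integrable (fun v => ‖v - u‖^2 * g v) := by
  refine ((hint.const_mul (2*‖u‖^2)).add (hmom.const_mul 2)).mono'
    ((((measurable_id.sub measurable_const).norm.pow measurable_const).mul
      hmeas)).aestronglyMeasurable ?_
  refine Filter.Eventually.of_forall fun v => ?_
  have h0 := hnn v
  have h2 : ‖v - u‖ ≤ ‖v‖ + ‖u‖ := norm_sub_le v u
  rw [Real.norm_eq_abs, abs_of_nonneg (mul_nonneg (by positivity) h0)]
  simp only [Pi.add_apply]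
  have h3 : ‖v - u‖^2 ≤ 2*‖v‖^2 + 2*‖u‖^2 := by
    nlinarith [sq_nonneg (‖v‖ - ‖u‖), norm_nonneg (v - u)]
  nlinarith [mul_le_mul_of_nonneg_right h3 h0]

private lemma int_inner_mul {g : E3 → ℝ} (hmeas : Measurable g) (hnn : ∀ v, 0 ≤ g v)
    (hint : Integrable g) (hmom : Integrable (fun v => ‖v‖^2 * g v)) (u : E3) :
    Integrable (fun v => (inner ℝ u v : ℝ) * g v) := by
  refine ((int_norm_mul hmeas hnn hint hmom).const_mul ‖u‖).mono'
    ((measurable_const.inner measurable_id).mul hmeas).aestronglyMeasurable ?_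
  refine Filter.Eventually.of_forall fun v => ?_
  rw [Real.norm_eq_abs, abs_mul, abs_of_nonneg (hnn v)]
  have := abs_real_inner_le_norm u v
  have h0 := hnn v
  nlinarith

private lemma key_identity {g : E3 → ℝ} (hmeas : Measurable g) (hnn : ∀ v, 0 ≤ g v)
    (hint : Integrable g) (hmom : Integrable (fun v => ‖v‖^2 * g v))
    (hρ : dens g ≠ 0) :
    ∫ v, ‖v - bulk g‖^2 * g v = (∫ v, ‖v‖^2 * g v) - dens g * ‖bulk g‖^2 := by
  set u := bulk g with hu
  have hI : (∫ v, g v • v) = dens g • u := by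
    rw [hu, bulk, smul_smul, mul_inv_cancel₀ hρ, one_smul]
  have hsplit : (fun v => ‖v - u‖^2 * g v)
      = fun v => ‖v‖^2 * g v - 2 * ((inner ℝ u v : ℝ) * g v) + ‖u‖^2 * g v := by
    funext v
    have : ‖v - u‖^2 = ‖v‖^2 - 2 * (inner ℝ v u : ℝ) + ‖u‖^2 := norm_sub_sq_real v u
    rw [this, real_inner_comm v u]; ring
  have h2 := int_inner_mul hmeas hnn hint hmom u
  have hB : Integrable (fun v => 2 * ((inner ℝ u v : ℝ) * g v)) := h2.const_mul 2
  have hA : Integrable (fun v => ‖v‖^2 * g v - 2 * ((inner ℝ u v : ℝ) * g v)) := hmom.sub hB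
  have hC : Integrable (fun v : E3 => ‖u‖^2 * g v) := hint.const_mul _
  rw [hsplit, integral_add hA hC, integral_sub hmom hB, integral_const_mul, integral_const_mul]
  have hinner : (∫ v, (inner ℝ u v : ℝ) * g v) = dens g * ‖u‖^2 := by
    have : (fun v => (inner ℝ u v : ℝ) * g v) = fun v => (inner ℝ u (g v • v) : ℝ) := by
      funext v; rw [real_inner_smul_right]; ring
    rw [this, integral_inner (int_vec hmeas hnn hint hmom), hI, real_inner_smul_right,
      real_inner_self_eq_norm_sq]
  rw [hinner]
  have hd : dens g = ∫ v, g v := rfl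
  rw [← hd]; ring

private lemma Q_lower {g : E3 → ℝ} (M ρmin c R : ℝ) (hM : 0 < M) (hρ : 0 < ρmin)
    (hc : c = (volume (Metric.ball (0:E3) 1)).toReal)
    (hR : R = (ρmin / (8 * M * c)) ^ ((3:ℝ)⁻¹))
    (hmeas : Measurable g) (hnn : ∀ v, 0 ≤ g v) (hint : Integrable g)
    (hmom : Integrable (fun v => ‖v‖^2 * g v))
    (hbd : ∀ v, g v ≤ 2 * M) (hdens : ρmin ≤ dens g) (u : E3) :
    R^2 * (3/4 * ρmin) ≤ ∫ v, ‖v - u‖^2 * g v := by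
  have hc0 : 0 < c := by
    rw [hc]
    exact ENNReal.toReal_pos (Metric.measure_ball_pos _ _ one_pos).ne' measure_ball_lt_top.ne
  have hRpos : 0 < R := by rw [hR]; positivity
  have hR3 : R^3 = ρmin / (8 * M * c) := by
    rw [hR, ← Real.rpow_natCast _ 3, ← Real.rpow_mul (by positivity)]
    norm_num
  set B := Metric.ball u R with hB
  have hBmeas : MeasurableSet B := measurableSet_ball
  have volBreal : (volume B).toReal = R^3 * c := by
    rw [hB, Measure.addHaar_ball _ _ hRpos.le, finrank_euclideanSpace, Fintype.card_fin,
      ENNReal.toReal_mul, ENNReal.toReal_ofReal (by positivity), hc]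
  have h_in : ∫ v in B, g v ≤ ρmin / 4 := by
    have h1 : ∫ v in B, g v ≤ ∫ _ in B, (2*M) := by
      refine setIntegral_mono_on hint.integrableOn
        (integrableOn_const (μ := volume) (s := B) (C := 2*M) measure_ball_lt_top.ne) hBmeas fun v _ => hbd v
    have h2 : ∫ _ in B, (2*M) = (volume B).toReal * (2*M) := by
      rw [setIntegral_const, smul_eq_mul, measureReal_def]
    rw [h2, volBreal, hR3] at h1
    calc ∫ v in B, g v ≤ ρmin / (8*M*c) * c * (2*M) := h1
    _ = ρmin / 4 := by field_simp; ring
  have hsum : (∫ v in B, g v) + ∫ v in Bᶜ, g v = dens g := integral_add_compl hBmeas hint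
  have h_out : 3/4 * ρmin ≤ ∫ v in Bᶜ, g v := by linarith
  have hQint := int_Q hmeas hnn hint hmom u
  calc R^2 * (3/4 * ρmin) ≤ R^2 * ∫ v in Bᶜ, g v := by
        exact mul_le_mul_of_nonneg_left h_out (by positivity)
    _ = ∫ v in Bᶜ, R^2 * g v := (integral_const_mul _ _).symm
    _ ≤ ∫ v in Bᶜ, ‖v - u‖^2 * g v := by
        refine setIntegral_mono_on ((hint.const_mul _).integrableOn)
          hQint.integrableOn hBmeas.compl fun v hv => ?_
        have hvu : R ≤ ‖v - u‖ := by
          have h5 := Metric.mem_ball.not.mp hv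
          rw [dist_eq_norm] at h5
          linarith [not_lt.mp h5]
        exact mul_le_mul_of_nonneg_right (by nlinarith) (hnn v)
    _ ≤ ∫ v, ‖v - u‖^2 * g v := by
        refine setIntegral_le_integral hQint (Filter.Eventually.of_forall fun v => ?_)
        exact mul_nonneg (by positivity) (hnn v)

end AuxLemmas

set_option maxHeartbeats 2000000 in
/-- Lemma 3.2: bounds on the macroscopic quantities on the local
time interval `[0, t₁]`, `t₁ = (4C_β(ν)‖wF₀‖_{L^∞})⁻¹` from the local `L^∞` estimate. -/
theorem local_macroscopic_bounds
    (ν β : ℝ) (hν1 : -(1 / 2 : ℝ) < ν) (hν2 : ν < 1) (hβ : 5 < β)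
    (C₀ : ℝ) (hC₀ : 0 < C₀) (M : ℝ) (Cβν : ℝ) (hCβν : 0 < Cβν) :
    ∃ C1 ≥ (1 : ℝ), ∀ (F₀ : E3 → E3 → ℝ) (F : ℝ → E3 → E3 → ℝ),
      Measurable (fun p : E3 × E3 => F₀ p.1 p.2) →
      (∀ x v, 0 ≤ F₀ x v) →
      WBdd β F₀ →
      wSup β F₀ = M →
      (∀ t : ℝ, 0 ≤ t → ∀ x : E3, C₀ ≤ ∫ v, F₀ (x - t • v) v) →
      IsMildSolution ν β F₀ F →
      (∀ t ∈ Set.Icc (0 : ℝ) (4 * Cβν * wSup β F₀)⁻¹, wSup β (F t) ≤ 2 * wSup β F₀) →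
      ∀ t ∈ Set.Icc (0 : ℝ) (4 * Cβν * wSup β F₀)⁻¹, ∀ x : E3,
        C1⁻¹ ≤ dens (F t x) ∧ dens (F t x) ≤ C1 ∧
        C1⁻¹ ≤ temp (F t x) ∧ temp (F t x) ≤ C1 ∧ ‖bulk (F t x)‖ ≤ C1 := by
  have hν3 : (0:ℝ) < 1 - ν := by linarith
  set c : ℝ := (volume (Metric.ball (0:E3) 1)).toReal with hcdef
  set K0 : ℝ := ∫ v : E3, (1 + ‖v‖) ^ (-β) with hK0
  set K1 : ℝ := ∫ v : E3, (1 + ‖v‖) ^ ((1:ℝ) - β) with hK1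
  set K2 : ℝ := ∫ v : E3, (1 + ‖v‖) ^ ((2:ℝ) - β) with hK2
  set Bc : ℝ := 2 * M * K2 / (3 * (1 - ν)) with hBcdef
  set t₁ : ℝ := (4 * Cβν * M)⁻¹ with ht₁
  set δ : ℝ := Real.exp (-(t₁ * Bc)) with hδdef
  set ρmin : ℝ := δ * C₀ with hρmindef
  set ρmax : ℝ := 2 * M * K0 with hρmaxdef
  set R : ℝ := (ρmin / (8 * M * c)) ^ ((3:ℝ)⁻¹) with hRdef
  set Tmin : ℝ := (3 * ρmax)⁻¹ * (R ^ 2 * (3 / 4 * ρmin)) with hTmindef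
  set Tmax : ℝ := (3 * ρmin)⁻¹ * (2 * M * K2) with hTmaxdef
  set U : ℝ := ρmin⁻¹ * (2 * M * K1) with hUdef
  set C1 : ℝ := max 1 (max ρmax (max ρmin⁻¹ (max Tmax (max Tmin⁻¹ U)))) with hC1def
  have hC1a : ρmax ≤ C1 := le_max_of_le_right (le_max_left _ _)
  have hC1b : ρmin⁻¹ ≤ C1 := le_max_of_le_right (le_max_of_le_right (le_max_left _ _))
  have hC1c : Tmax ≤ C1 :=
    le_max_of_le_right (le_max_of_le_right (le_max_of_le_right (le_max_left _ _)))
  have hC1d : Tmin⁻¹ ≤ C1 := le_max_of_le_right (le_max_of_le_right (le_max_of_le_right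
    (le_max_of_le_right (le_max_left _ _))))
  have hC1e : U ≤ C1 := le_max_of_le_right (le_max_of_le_right (le_max_of_le_right
    (le_max_of_le_right (le_max_right _ _))))
  refine ⟨C1, le_max_left _ _, ?_⟩
  intro F₀ F hF₀meas hF₀nn hF₀bdd hM0 hlow sol h2M
  rw [hM0] at h2M ⊢
  rw [← ht₁] at h2M ⊢
  -- M is positive
  have hM : 0 < M := by
    by_contra hM'
    push_neg at hM'
    have hzero : ∀ (y w : E3), F₀ y w = 0 := by
      intro y w
      have h1 : (1 + ‖w‖) ^ β * F₀ y w ≤ M := by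
        rw [← hM0]
        exact le_ciSup hF₀bdd (⟨y, w⟩ : E3 × E3)
      have hp : (0:ℝ) < (1 + ‖w‖) ^ β := Real.rpow_pos_of_pos (by positivity) β
      nlinarith [hF₀nn y w]
    have h0 := hlow 0 le_rfl 0
    have heq : (fun v : E3 => F₀ ((0:E3) - (0:ℝ) • v) v) = fun _ => (0:ℝ) := by
      funext v; exact hzero _ _
    rw [heq, integral_zero] at h0
    linarith
  have hδpos : 0 < δ := Real.exp_pos _
  have hρminpos : 0 < ρmin := mul_pos hδpos hC₀
  have ht₁nn : 0 ≤ t₁ := by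
    rw [ht₁]; exact inv_nonneg.mpr (by positivity)
  have hK2nn : 0 ≤ K2 := integral_nonneg fun v => Real.rpow_nonneg (by positivity) _
  have hK1nn : 0 ≤ K1 := integral_nonneg fun v => Real.rpow_nonneg (by positivity) _
  have hBcnn : 0 ≤ Bc := by
    rw [hBcdef]; exact div_nonneg (by positivity) (by positivity)
  have hRpos : 0 < R := by
    have hc0 : 0 < c := by
      rw [hcdef]
      exact ENNReal.toReal_pos (Metric.measure_ball_pos _ _ one_pos).ne' measure_ball_lt_top.ne
    rw [hRdef]; positivity
  -- pointwise bounds on F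
  have hptw : ∀ t', t' ∈ Set.Icc 0 t₁ → ∀ (y v : E3),
      F t' y v ≤ 2 * M * (1 + ‖v‖) ^ (-β) := by
    intro t' ht' y v
    have hp : (0:ℝ) < (1 + ‖v‖) ^ β := Real.rpow_pos_of_pos (by positivity) β
    have h1 : (1 + ‖v‖) ^ β * F t' y v ≤ 2 * M := by
      calc (1 + ‖v‖) ^ β * F t' y v ≤ wSup β (F t') :=
            le_ciSup (sol.wnorm_bdd t' ht'.1) (⟨y, v⟩ : E3 × E3)
        _ ≤ 2 * M := h2M t' ht'
    calc F t' y v ≤ 2 * M / (1 + ‖v‖) ^ β := (le_div_iff₀ hp).mpr (by nlinarith)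
      _ = 2 * M * (1 + ‖v‖) ^ (-β) := by
          rw [Real.rpow_neg (by positivity), div_eq_mul_inv]
  have hbd2M : ∀ t', t' ∈ Set.Icc 0 t₁ → ∀ (y v : E3), F t' y v ≤ 2 * M := by
    intro t' ht' y v
    have h1 : (1 + ‖v‖) ^ (-β) ≤ 1 :=
      Real.rpow_le_one_of_one_le_of_nonpos (by linarith [norm_nonneg v]) (by linarith)
    calc F t' y v ≤ 2 * M * (1 + ‖v‖) ^ (-β) := hptw t' ht' y v
      _ ≤ 2 * M * 1 := mul_le_mul_of_nonneg_left h1 (by positivity)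
      _ = 2 * M := mul_one _
  have hsec : ∀ t', 0 ≤ t' → ∀ y : E3, Measurable (fun v => F t' y v) := fun t' h y =>
    (sol.meas t' h).comp (measurable_const.prodMk measurable_id)
  -- second moment bound
  have hSbd : ∀ t', t' ∈ Set.Icc 0 t₁ → ∀ y : E3,
      ∫ v, ‖v‖ ^ 2 * F t' y v ≤ 2 * M * K2 := by
    intro t' ht' y
    have h := mom_bd β M hβ (F t' y) (sol.nonneg t' ht'.1 y) (hptw t' ht' y) 2 le_rfl
    simpa only [Nat.cast_ofNat, ← hK2] using h
  -- collision frequency bounds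
  have hcollb : ∀ s, s ∈ Set.Icc 0 t₁ → ∀ y : E3,
      0 ≤ collFreq (F s y) ν ∧ collFreq (F s y) ν ≤ Bc := by
    intro s hs y
    have hd := sol.dens_pos s hs.1 y
    have htp := sol.temp_pos s hs.1 y
    constructor
    · rw [collFreq]
      exact div_nonneg (mul_nonneg hd.le htp.le) hν3.le
    · have hid := key_identity (hsec s hs.1 y) (sol.nonneg s hs.1 y)
        (sol.integrable s hs.1 y) (sol.moment2 s hs.1 y) hd.ne'
      have hS := hSbd s hs y
      have hQS : ∫ v, ‖v - bulk (F s y)‖ ^ 2 * F s y v ≤ 2 * M * K2 := by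
        nlinarith [mul_nonneg hd.le (sq_nonneg ‖bulk (F s y)‖)]
      have heq : collFreq (F s y) ν
          = (∫ v, ‖v - bulk (F s y)‖ ^ 2 * F s y v) / (3 * (1 - ν)) := by
        rw [collFreq, temp]
        field_simp
      rw [heq, hBcdef]
      exact div_le_div_of_nonneg_right hQS (by positivity) |>.trans (le_of_eq rfl)
  -- the main estimates at (t, x)
  intro t ht x
  obtain ⟨ht0, ht1⟩ := ht
  have hgmeas := hsec t ht0 x
  have hgnn := sol.nonneg t ht0 x
  have hgint := sol.integrable t ht0 x
  have hgmom := sol.moment2 t ht0 x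
  have hd := sol.dens_pos t ht0 x
  -- pointwise lower bound via the mild formulation
  have hlbv : ∀ v : E3, δ * F₀ (x - t • v) v ≤ F t x v := by
    intro v
    have hJle : (∫ τ in (0:ℝ)..t, collFreq (F τ (x - (t - τ) • v)) ν) ≤ t₁ * Bc := by
      by_cases hii : IntervalIntegrable
          (fun τ => collFreq (F τ (x - (t - τ) • v)) ν) volume 0 t
      · have h1 : (∫ τ in (0:ℝ)..t, collFreq (F τ (x - (t - τ) • v)) ν)
            ≤ ∫ _ in (0:ℝ)..t, Bc :=
          intervalIntegral.integral_mono_on ht0 hii intervalIntegrable_const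
            (fun τ hτ => (hcollb τ ⟨hτ.1, hτ.2.trans ht1⟩ _).2)
        rw [intervalIntegral.integral_const, smul_eq_mul, sub_zero] at h1
        calc (∫ τ in (0:ℝ)..t, collFreq (F τ (x - (t - τ) • v)) ν) ≤ t * Bc := h1
          _ ≤ t₁ * Bc := mul_le_mul_of_nonneg_right ht1 hBcnn
      · rw [intervalIntegral.integral_undef hii]
        exact mul_nonneg ht₁nn hBcnn
    have hexp : δ ≤ Real.exp (-(∫ τ in (0:ℝ)..t, collFreq (F τ (x - (t - τ) • v)) ν)) := by
      rw [hδdef]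
      exact Real.exp_le_exp.mpr (by linarith)
    rw [sol.mild t ht0 x v]
    have step1 : δ * F₀ (x - t • v) v ≤ F₀ (x - t • v) v *
        Real.exp (-(∫ τ in (0:ℝ)..t, collFreq (F τ (x - (t - τ) • v)) ν)) := by
      rw [mul_comm]
      exact mul_le_mul_of_nonneg_left hexp (hF₀nn _ _)
    refine step1.trans (le_add_of_nonneg_right ?_)
    apply intervalIntegral.integral_nonneg ht0
    intro s hs
    have h1 := (hcollb s ⟨hs.1, hs.2.trans ht1⟩ (x - (t - s) • v)).1
    have h2 : 0 ≤ aGauss (F s (x - (t - s) • v)) ν v := by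
      rw [aGauss]
      exact mul_nonneg (div_nonneg (sol.dens_pos s hs.1 _).le (Real.sqrt_nonneg _))
        (Real.exp_pos _).le
    exact mul_nonneg (mul_nonneg (Real.exp_pos _).le h1) h2
  have hcomp : Measurable fun v : E3 => F₀ (x - t • v) v :=
    hF₀meas.comp ((measurable_const.sub (measurable_id.const_smul t)).prodMk measurable_id)
  have hF₀int : Integrable (fun v : E3 => F₀ (x - t • v) v) := by
    refine (hgint.const_mul δ⁻¹).mono' hcomp.aestronglyMeasurable
      (Filter.Eventually.of_forall fun v => ?_)
    rw [Real.norm_eq_abs, abs_of_nonneg (hF₀nn _ _)]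
    calc F₀ (x - t • v) v = δ⁻¹ * (δ * F₀ (x - t • v) v) := by field_simp
      _ ≤ δ⁻¹ * F t x v := mul_le_mul_of_nonneg_left (hlbv v) (inv_nonneg.mpr hδpos.le)
  -- density lower bound
  have hρlow : ρmin ≤ dens (F t x) := by
    have h1 : (∫ v, δ * F₀ (x - t • v) v) ≤ ∫ v, F t x v :=
      integral_mono (hF₀int.const_mul δ) hgint hlbv
    rw [integral_const_mul] at h1
    have h2 := hlow t ht0 x
    have h3 := mul_le_mul_of_nonneg_left h2 hδpos.le
    rw [hρmindef, dens]
    linarith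
  -- density upper bound
  have hρhigh : dens (F t x) ≤ ρmax := by
    have h := mom_bd β M hβ (F t x) hgnn (hptw t ⟨ht0, ht1⟩ x) 0 (by norm_num)
    simp only [pow_zero, one_mul, Nat.cast_zero, zero_sub, ← hK0] at h
    rw [dens, hρmaxdef]
    exact h
  have hρmaxpos : 0 < ρmax := lt_of_lt_of_le hρminpos (hρlow.trans hρhigh)
  -- temperature bounds
  have hS := hSbd t ⟨ht0, ht1⟩ x
  have hkey := key_identity hgmeas hgnn hgint hgmom hd.ne'
  have hQnn : 0 ≤ ∫ v, ‖v - bulk (F t x)‖ ^ 2 * F t x v :=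
    integral_nonneg fun v => mul_nonneg (by positivity) (hgnn v)
  have hQhigh : ∫ v, ‖v - bulk (F t x)‖ ^ 2 * F t x v ≤ 2 * M * K2 := by
    nlinarith [mul_nonneg hd.le (sq_nonneg ‖bulk (F t x)‖)]
  have hQlow : R ^ 2 * (3 / 4 * ρmin) ≤ ∫ v, ‖v - bulk (F t x)‖ ^ 2 * F t x v :=
    Q_lower M ρmin c R hM hρminpos hcdef hRdef hgmeas hgnn hgint hgmom
      (hbd2M t ⟨ht0, ht1⟩ x) hρlow (bulk (F t x))
  have htlow : Tmin ≤ temp (F t x) := by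
    rw [temp]
    have h1 : (3 * ρmax)⁻¹ ≤ (3 * dens (F t x))⁻¹ := by
      apply inv_anti₀ (by positivity) (by linarith)
    calc Tmin = (3 * ρmax)⁻¹ * (R ^ 2 * (3 / 4 * ρmin)) := hTmindef
      _ ≤ (3 * dens (F t x))⁻¹ * ∫ v, ‖v - bulk (F t x)‖ ^ 2 * F t x v :=
        mul_le_mul h1 hQlow (by positivity) (by positivity)
  have hthigh : temp (F t x) ≤ Tmax := by
    rw [temp]
    have h1 : (3 * dens (F t x))⁻¹ ≤ (3 * ρmin)⁻¹ :=
      inv_anti₀ (by positivity) (by linarith)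
    exact mul_le_mul h1 hQhigh hQnn (by positivity)
  have hTminpos : 0 < Tmin := by
    rw [hTmindef]; positivity
  -- bulk velocity bound
  have hub : ‖bulk (F t x)‖ ≤ U := by
    rw [bulk, norm_smul, Real.norm_eq_abs, abs_of_pos (inv_pos.mpr hd)]
    have hI : ‖∫ v, F t x v • v‖ ≤ 2 * M * K1 := by
      have hm1 := mom_bd β M hβ (F t x) hgnn (hptw t ⟨ht0, ht1⟩ x) 1 (by norm_num)
      simp only [Nat.cast_one, pow_one, ← hK1] at hm1
      calc ‖∫ v, F t x v • v‖ ≤ ∫ v, ‖F t x v • v‖ := norm_integral_le_integral_norm _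
        _ = ∫ v, ‖v‖ * F t x v := by
            congr 1; funext v
            rw [norm_smul, Real.norm_eq_abs, abs_of_nonneg (hgnn v), mul_comm]
        _ ≤ 2 * M * K1 := hm1
    calc (dens (F t x))⁻¹ * ‖∫ v, F t x v • v‖ ≤ ρmin⁻¹ * (2 * M * K1) :=
        mul_le_mul (inv_anti₀ hρminpos hρlow) hI (norm_nonneg _)
          (inv_nonneg.mpr hρminpos.le)
      _ = U := hUdef.symm
  -- assemble
  have hinvρ : C1⁻¹ ≤ ρmin := by
    have := inv_anti₀ (inv_pos.mpr hρminpos) hC1b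
    rwa [inv_inv] at this
  have hinvT : C1⁻¹ ≤ Tmin := by
    have := inv_anti₀ (inv_pos.mpr hTminpos) hC1d
    rwa [inv_inv] at this
  exact ⟨hinvρ.trans hρlow, hρhigh.trans hC1a, hinvT.trans htlow,
    hthigh.trans hC1c, hub.trans hC1e⟩
end

section
/- There exists an absolute constant C > 0 such that for every measurable ρ₀ : ℝ³ → ℝ that is ℤ³-periodic with 0 ≤ ρ₀(x) for all x, every N > 0, every t > 0 and every x ∈ ℝ³: ∫_{ℝ³}(1+|v|²)·|ρ₀(x−vt) − 1|·μ(v)dv ≤ (1 + ∥ρ₀∥_{L∞})·∫_{{|v| ≥ N}}(1+|v|²)μ(v)dv + C·(1 + (Nt)³)·t^{−3}·∫_{[0,1]³}|ρ₀(y) − 1|dy. -/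
open MeasureTheory Real Matrix ENNReal

section FTDaux

lemma E3.abs_coord_le (y : E3) (i : Fin 3) : |y i| ≤ ‖y‖ := by
  rw [EuclideanSpace.norm_eq, ← Real.sqrt_sq_eq_abs]
  apply Real.sqrt_le_sqrt
  have h := Finset.single_le_sum (f := fun j => ‖y j‖ ^ 2)
    (fun j _ => sq_nonneg _) (Finset.mem_univ i)
  simpa [Real.norm_eq_abs, sq_abs] using h

lemma Mw_nonneg (v : E3) : 0 ≤ Mw v :=
  mul_nonneg (Real.rpow_nonneg (by positivity) _) (Real.exp_nonneg _)

lemma Mw_key (v : E3) : (1 + ‖v‖ ^ 2) * Mw v ≤ rexp (-(1 / 4) * ‖v‖ ^ 2) := by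
  set s := ‖v‖ ^ 2 with hs
  have hs0 : 0 ≤ s := sq_nonneg _
  have hconst : (2 * π : ℝ) ^ (-(3 : ℝ) / 2) ≤ 4⁻¹ := by
    have h1 : (4 : ℝ) ≤ 2 * π := by nlinarith [Real.pi_gt_three]
    have h2 : (2 * π : ℝ) ^ (-(3 : ℝ) / 2) = ((2 * π : ℝ) ^ ((3 : ℝ) / 2))⁻¹ := by
      rw [← Real.rpow_neg (by positivity)]; norm_num
    have h3 : (4 : ℝ) ≤ (2 * π) ^ ((3 : ℝ) / 2) := by
      calc (4 : ℝ) ≤ 2 * π := h1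
        _ = (2 * π) ^ (1 : ℝ) := (Real.rpow_one _).symm
        _ ≤ (2 * π) ^ ((3 : ℝ) / 2) :=
            Real.rpow_le_rpow_of_exponent_le (by linarith) (by norm_num)
    rw [h2]
    gcongr
  have hexp : rexp (-(1 / 4) * s) = rexp (s / 4) * rexp (-s / 2) := by
    rw [← Real.exp_add]; ring_nf
  have h4 : (1 + s) * 4⁻¹ ≤ rexp (s / 4) := by
    nlinarith [Real.add_one_le_exp (s / 4)]
  have hE : (0 : ℝ) < rexp (-s / 2) := Real.exp_pos _
  calc (1 + s) * Mw v ≤ (1 + s) * (4⁻¹ * rexp (-s / 2)) := by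
        unfold Mw
        rw [← hs]
        exact mul_le_mul_of_nonneg_left
          (mul_le_mul_of_nonneg_right hconst (Real.exp_nonneg _)) (by positivity)
    _ ≤ rexp (-(1 / 4) * s) := by
        rw [hexp]
        nlinarith [mul_le_mul_of_nonneg_right h4 hE.le]

lemma Mw_key_one (v : E3) : (1 + ‖v‖ ^ 2) * Mw v ≤ 1 :=
  (Mw_key v).trans (Real.exp_le_one_iff.2 (by nlinarith [sq_nonneg ‖v‖]))

lemma Mw_continuous : Continuous Mw :=
  continuous_const.mul (((continuous_norm.pow 2).neg.div_const 2).rexp)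

lemma gauss_integrable : Integrable (fun v : E3 => rexp (-(1 / 4 : ℝ) * ‖v‖ ^ 2)) := by
  have h := GaussianFourier.integrable_cexp_neg_mul_sq_norm_add
    (b := (1 / 4 : ℂ)) (by norm_num) 0 (0 : E3)
  refine h.norm.congr (Filter.Eventually.of_forall fun v => ?_)
  show ‖Complex.exp _‖ = _
  rw [Complex.norm_exp]
  congr 1
  simp [← Complex.ofReal_pow]

lemma G_integrable : Integrable (fun v : E3 => (1 + ‖v‖ ^ 2) * Mw v) := by
  refine gauss_integrable.mono ?_ (Filter.Eventually.of_forall fun v => ?_)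
  · exact ((continuous_const.add (continuous_norm.pow 2)).mul Mw_continuous).aestronglyMeasurable
  · rw [Real.norm_eq_abs, Real.norm_eq_abs,
      abs_of_nonneg (mul_nonneg (by positivity) (Mw_nonneg v)),
      abs_of_nonneg (Real.exp_nonneg _)]
    exact Mw_key v

lemma E3.coord_continuous (i : Fin 3) : Continuous (fun y : E3 => y i) := by
  exact (continuous_apply i).comp (PiLp.continuous_ofLp (p := 2) (β := fun _ : Fin 3 => ℝ))

end FTDaux

/-- torus case `Ω = 𝕋³`: decay of the free transport of `ρ₀ - 1` for
`ℤ³`-periodic data. -/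
theorem free_transport_decay_T3 :
    ∃ C > (0 : ℝ), ∀ ρ₀ : E3 → ℝ,
      Measurable ρ₀ → (∀ x, 0 ≤ ρ₀ x) →
      (∀ (x : E3) (k : Fin 3 → ℤ),
        ρ₀ (x + (WithLp.equiv 2 (Fin 3 → ℝ)).symm fun i => (k i : ℝ)) = ρ₀ x) →
      ∀ B : ℝ, (∀ x, ρ₀ x ≤ B) →
      ∀ N : ℝ, 0 < N → ∀ t : ℝ, 0 < t → ∀ x : E3,
        ∫ v, (1 + ‖v‖ ^ 2) * |ρ₀ (x - t • v) - 1| * Mw v ≤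
          (1 + B) * (∫ v in {v : E3 | N ≤ ‖v‖}, (1 + ‖v‖ ^ 2) * Mw v)
            + C * (1 + (N * t) ^ 3) / t ^ 3 *
              ∫ y in {y : E3 | ∀ i, y i ∈ Set.Icc (0 : ℝ) 1}, |ρ₀ y - 1| := by
  refine ⟨32, by norm_num, ?_⟩
  intro ρ₀ hmeas hpos hper B hB N hN t ht x
  have hB0 : (0 : ℝ) ≤ B := le_trans (hpos 0) (hB 0)
  have habs : ∀ y, |ρ₀ y - 1| ≤ 1 + B := fun y =>
    abs_le.2 ⟨by linarith [hpos y], by linarith [hB y]⟩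
  set S : Set E3 := {v : E3 | N ≤ ‖v‖} with hSdef
  have hS : MeasurableSet S := (isClosed_le continuous_const continuous_norm).measurableSet
  set F : E3 → ℝ := fun v => (1 + ‖v‖ ^ 2) * |ρ₀ (x - t • v) - 1| * Mw v with hFdef
  have hsubmeas : Measurable (fun v : E3 => x - t • v) :=
    measurable_const.sub (measurable_id.const_smul t)
  have habsmeas : Measurable (fun v : E3 => |ρ₀ (x - t • v) - 1|) :=
    ((hmeas.comp hsubmeas).sub measurable_const).abs
  have hFmeas : Measurable F :=
    ((measurable_const.add ((measurable_norm : Measurable fun v : E3 => ‖v‖).pow_const 2)).mul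
      habsmeas).mul Mw_continuous.measurable
  have hFnonneg : ∀ v, 0 ≤ F v := fun v =>
    mul_nonneg (mul_nonneg (by positivity) (abs_nonneg _)) (Mw_nonneg v)
  have hFle : ∀ v, F v ≤ (1 + B) * ((1 + ‖v‖ ^ 2) * Mw v) := by
    intro v
    have h1 := habs (x - t • v)
    have h2 := Mw_nonneg v
    have h3 : (0 : ℝ) ≤ 1 + ‖v‖ ^ 2 := by positivity
    have h4 := abs_nonneg (ρ₀ (x - t • v) - 1)
    simp only [hFdef]
    nlinarith [mul_nonneg h3 h2]
  have hFint : Integrable F := by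
    refine (G_integrable.const_mul (1 + B)).mono hFmeas.aestronglyMeasurable
      (Filter.Eventually.of_forall fun v => ?_)
    rw [Real.norm_eq_abs, Real.norm_eq_abs, abs_of_nonneg (hFnonneg v),
      abs_of_nonneg (mul_nonneg (by linarith) (mul_nonneg (by positivity) (Mw_nonneg v)))]
    exact hFle v
  have bound1 : ∫ v in S, F v ≤ (1 + B) * ∫ v in S, (1 + ‖v‖ ^ 2) * Mw v := by
    rw [← integral_const_mul]
    exact setIntegral_mono_on hFint.integrableOn
      ((G_integrable.const_mul (1 + B)).integrableOn) hS (fun v _ => hFle v)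
  -- the small-velocity piece
  set Q : Set E3 := {y : E3 | ∀ i, y i ∈ Set.Icc (0 : ℝ) 1} with hQdef
  have hQmeas : MeasurableSet Q := by
    have hQi : Q = ⋂ i, (fun y : E3 => y i) ⁻¹' Set.Icc (0 : ℝ) 1 := by
      ext y; simp [hQdef, Set.mem_iInter]
    rw [hQi]
    exact MeasurableSet.iInter fun i =>
      measurableSet_Icc.preimage (E3.coord_continuous i).measurable
  have hQsub : Q ⊆ Metric.closedBall 0 2 := by
    intro y hy
    rw [Metric.mem_closedBall, dist_zero_right, EuclideanSpace.norm_eq]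
    have hsum : ∑ i, ‖y i‖ ^ 2 ≤ 4 := by
      have hi : ∀ i : Fin 3, ‖y i‖ ^ 2 ≤ 1 := by
        intro i
        obtain ⟨h0, h1⟩ := hy i
        rw [Real.norm_eq_abs, abs_of_nonneg h0]
        nlinarith
      calc ∑ i, ‖y i‖ ^ 2 ≤ ∑ _i : Fin 3, (1 : ℝ) := Finset.sum_le_sum fun i _ => hi i
        _ ≤ 4 := by rw [Finset.sum_const, Finset.card_univ]; norm_num
    calc Real.sqrt (∑ i, ‖y i‖ ^ 2) ≤ Real.sqrt 4 := Real.sqrt_le_sqrt hsum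
      _ = 2 := by rw [show (4 : ℝ) = 2 ^ 2 by norm_num, Real.sqrt_sq (by norm_num)]
  have hQvol : volume Q < ⊤ :=
    lt_of_le_of_lt (measure_mono hQsub) measure_closedBall_lt_top
  set h : E3 → ℝ≥0∞ := fun y => ENNReal.ofReal |ρ₀ y - 1| with hhdef
  have hhmeas : Measurable h :=
    ENNReal.measurable_ofReal.comp ((hmeas.sub measurable_const).abs)
  set I : ℝ≥0∞ := ∫⁻ y in Q, h y with hIdef
  have hIne : I ≠ ⊤ := by
    have hle : I ≤ ENNReal.ofReal (1 + B) * volume Q := by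
      rw [hIdef]
      calc ∫⁻ y in Q, h y ≤ ∫⁻ _y in Q, ENNReal.ofReal (1 + B) :=
            lintegral_mono fun y => ENNReal.ofReal_le_ofReal (habs y)
        _ = ENNReal.ofReal (1 + B) * volume Q := by rw [setLIntegral_const]
    exact ne_top_of_le_ne_top (ENNReal.mul_ne_top ENNReal.ofReal_ne_top hQvol.ne) hle
  have hIreal : ∫ y in Q, |ρ₀ y - 1| = I.toReal := by
    rw [integral_eq_lintegral_of_nonneg_ae (f := fun y => |ρ₀ y - 1|)
      (Filter.Eventually.of_forall fun y => abs_nonneg _)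
      (((hmeas.sub measurable_const).abs.aestronglyMeasurable.restrict :
        AEStronglyMeasurable (fun y => |ρ₀ y - 1|) _))]
  set r : ℝ := N * t with hrdef
  have hr : 0 < r := mul_pos hN ht
  set cube : (Fin 3 → ℤ) → Set E3 :=
    fun k => {y : E3 | ∀ i, (k i : ℝ) ≤ y i ∧ y i ≤ k i + 1} with hcubedef
  have hcubeI : ∀ k, ∫⁻ y in cube k, h y = I := by
    intro k
    have hpre : (fun y : E3 =>
        y + (WithLp.equiv 2 (Fin 3 → ℝ)).symm (fun i => (k i : ℝ))) ⁻¹' (cube k) = Q := by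
      ext y
      have hap : ∀ i, (y + (WithLp.equiv 2 (Fin 3 → ℝ)).symm (fun i => (k i : ℝ))) i
          = y i + (k i : ℝ) := fun i => rfl
      simp only [Set.mem_preimage, hcubedef, Set.mem_setOf_eq, hQdef, Set.mem_Icc, hap]
      constructor
      · intro hc i; have := hc i; constructor <;> linarith [this.1, this.2]
      · intro hc i; have := hc i; constructor <;> linarith [this.1, this.2]
    have hmp : MeasurePreserving
        (fun y : E3 => y + (WithLp.equiv 2 (Fin 3 → ℝ)).symm (fun i => (k i : ℝ)))
        volume volume := measurePreserving_add_right volume _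
    have hcv := hmp.setLIntegral_comp_preimage_emb (measurableEmbedding_addRight _) h (cube k)
    rw [hpre] at hcv
    rw [← hcv, hIdef]
    refine setLIntegral_congr_fun hQmeas (fun y _ => ?_)
    simp only [hhdef, hper y k]
  set K : Finset (Fin 3 → ℤ) :=
    Fintype.piFinset (fun i => Finset.Icc ⌊x i - r⌋ ⌊x i + r⌋) with hK
  have hcover : Metric.closedBall x r ⊆ ⋃ k ∈ (K : Set (Fin 3 → ℤ)), cube k := by
    intro y hy
    have hcoord : ∀ i, |y i - x i| ≤ r := by
      intro i
      have h1 : |(y - x) i| ≤ ‖y - x‖ := E3.abs_coord_le _ i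
      have h2 : (y - x) i = y i - x i := rfl
      rw [h2] at h1
      exact h1.trans (by rwa [Metric.mem_closedBall, dist_eq_norm] at hy)
    refine Set.mem_biUnion (Finset.mem_coe.2 (?_ : (fun i => ⌊y i⌋) ∈ K)) ?_
    · rw [hK, Fintype.mem_piFinset]
      intro i
      rw [Finset.mem_Icc]
      have hb := abs_le.1 (hcoord i)
      exact ⟨Int.floor_le_floor (by linarith [hb.2]), Int.floor_le_floor (by linarith [hb.1])⟩
    · intro i
      exact ⟨Int.floor_le _, (Int.lt_floor_add_one _).le⟩
  have hfac : ∀ i : Fin 3, ((Finset.Icc ⌊x i - r⌋ ⌊x i + r⌋).card : ℝ) ≤ 2 * r + 2 := by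
    intro i
    rw [Int.card_Icc]
    rcases le_or_gt (⌊x i + r⌋ + 1 - ⌊x i - r⌋) 0 with hle | hlt
    · rw [Int.toNat_of_nonpos hle]
      push_cast
      linarith
    · have h1 : (⌊x i + r⌋ : ℝ) ≤ x i + r := Int.floor_le _
      have h2 : x i - r - 1 < (⌊x i - r⌋ : ℝ) := Int.sub_one_lt_floor _
      have h3 : ((⌊x i + r⌋ + 1 - ⌊x i - r⌋).toNat : ℝ) = ((⌊x i + r⌋ : ℝ) + 1 - ⌊x i - r⌋) := by
        rw [← Int.cast_natCast, Int.toNat_of_nonneg hlt.le]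
        push_cast
        ring
      rw [h3]
      linarith
  have hcard : (K.card : ℝ) ≤ (2 * r + 2) ^ 3 := by
    have hKc : (K.card : ℝ) = ∏ i : Fin 3, ((Finset.Icc ⌊x i - r⌋ ⌊x i + r⌋).card : ℝ) := by
      rw [hK, Fintype.card_piFinset]
      push_cast
      rfl
    rw [hKc]
    calc ∏ i : Fin 3, ((Finset.Icc ⌊x i - r⌋ ⌊x i + r⌋).card : ℝ)
        ≤ ∏ _i : Fin 3, (2 * r + 2) :=
          Finset.prod_le_prod (fun i _ => Nat.cast_nonneg _) (fun i _ => hfac i)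
      _ = (2 * r + 2) ^ 3 := by
          rw [Finset.prod_const, Finset.card_univ]
          norm_num
  have hcubemeas : ∀ k, MeasurableSet (cube k) := by
    intro k
    have : cube k = ⋂ i, ((fun y : E3 => y i) ⁻¹' Set.Icc (k i : ℝ) (k i + 1)) := by
      ext y; simp [hcubedef, Set.mem_iInter, Set.mem_Icc]
    rw [this]
    exact MeasurableSet.iInter fun i =>
      measurableSet_Icc.preimage (E3.coord_continuous i).measurable
  have hstep3 : ∫⁻ y in Metric.closedBall x r, h y ≤ ENNReal.ofReal ((2 * r + 2) ^ 3) * I := by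
    calc ∫⁻ y in Metric.closedBall x r, h y ≤ ∫⁻ y in ⋃ k ∈ (K : Set (Fin 3 → ℤ)), cube k, h y :=
          lintegral_mono_set hcover
      _ ≤ ∑' k : (K : Set (Fin 3 → ℤ)), ∫⁻ y in cube k, h y := by
          rw [Set.biUnion_eq_iUnion]
          exact lintegral_iUnion_le _ _
      _ = ∑' k : K, ∫⁻ y in cube k, h y := rfl
      _ = ∑' _k : K, I := tsum_congr fun k => hcubeI k
      _ = K.card * I := by
          rw [tsum_fintype]
          simp [Finset.sum_const, Finset.card_univ, Fintype.card_coe, nsmul_eq_mul]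
      _ ≤ ENNReal.ofReal ((2 * r + 2) ^ 3) * I := by
          apply mul_le_mul_left
          rw [← ENNReal.ofReal_natCast]
          exact ENNReal.ofReal_le_ofReal hcard
  set g : E3 → ℝ≥0∞ := (Metric.closedBall x r).indicator h with hgdef
  have hg : Measurable g := hhmeas.indicator measurableSet_closedBall
  have hstep2 : ∫⁻ v, g (x - t • v) =
      ENNReal.ofReal ((t ^ 3)⁻¹) * ∫⁻ y in Metric.closedBall x r, h y := by
    have hφm : Measurable (fun v : E3 => x + (-t) • v) :=
      measurable_const.add (measurable_id.const_smul (-t) : Measurable fun v : E3 => (-t) • v)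
    have hxt : (fun v : E3 => g (x - t • v)) = fun v => g (x + (-t) • v) := by
      funext v; rw [neg_smul, ← sub_eq_add_neg]
    have hsm : Measurable (fun v : E3 => (-t) • v) := measurable_id.const_smul (-t)
    have hmap : Measure.map (fun v : E3 => x + (-t) • v) volume
        = ENNReal.ofReal ((t ^ 3)⁻¹) • volume := by
      have hcomp : (fun v : E3 => x + (-t) • v)
          = (fun y : E3 => x + y) ∘ (fun v : E3 => (-t) • v) := rfl
      rw [hcomp, ← Measure.map_map (measurable_const_add x) hsm]
      have h3 : Measure.map (fun v : E3 => (-t) • v) volume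
          = ENNReal.ofReal ((t ^ 3)⁻¹) • volume := by
        rw [Measure.map_addHaar_smul volume (neg_ne_zero.2 ht.ne')]
        congr 1
        rw [finrank_euclideanSpace_fin]
        rw [abs_inv, abs_pow, abs_neg, abs_of_pos ht]
      rw [h3, Measure.map_smul, map_add_left_eq_self]
    calc ∫⁻ v, g (x - t • v) = ∫⁻ v, g (x + (-t) • v) := by rw [hxt]
      _ = ∫⁻ y, g y ∂(Measure.map (fun v : E3 => x + (-t) • v) volume) :=
          (lintegral_map hg hφm).symm
      _ = ENNReal.ofReal ((t ^ 3)⁻¹) * ∫⁻ y, g y := by rw [hmap, lintegral_smul_measure, smul_eq_mul]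
      _ = ENNReal.ofReal ((t ^ 3)⁻¹) * ∫⁻ y in Metric.closedBall x r, h y := by
          rw [hgdef, lintegral_indicator measurableSet_closedBall]
  have hstep1 : ∫⁻ v in Sᶜ, h (x - t • v) ≤ ∫⁻ v, g (x - t • v) := by
    have heq : ∀ v ∈ Sᶜ, h (x - t • v) = g (x - t • v) := by
      intro v hv
      have hmem : x - t • v ∈ Metric.closedBall x r := by
        rw [Metric.mem_closedBall, dist_eq_norm]
        have hxx : x - t • v - x = -(t • v) := by abel
        rw [hxx, norm_neg, norm_smul, Real.norm_eq_abs, abs_of_pos ht]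
        have hvN : ‖v‖ ≤ N := by
          have hv' : ¬ N ≤ ‖v‖ := hv
          linarith [lt_of_not_ge hv']
        calc t * ‖v‖ ≤ t * N := mul_le_mul_of_nonneg_left hvN ht.le
          _ = r := by rw [hrdef]; ring
      rw [hgdef, Set.indicator_of_mem hmem]
    calc ∫⁻ v in Sᶜ, h (x - t • v) = ∫⁻ v in Sᶜ, g (x - t • v) :=
          setLIntegral_congr_fun hS.compl heq
      _ ≤ ∫⁻ v, g (x - t • v) := setLIntegral_le_lintegral _ _
  have hkey : ∫⁻ v in Sᶜ, h (x - t • v)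
      ≤ ENNReal.ofReal (32 * (1 + (N * t) ^ 3) / t ^ 3) * I := by
    refine (hstep1.trans (le_of_eq hstep2)).trans ?_
    calc ENNReal.ofReal ((t ^ 3)⁻¹) * ∫⁻ y in Metric.closedBall x r, h y
        ≤ ENNReal.ofReal ((t ^ 3)⁻¹) * (ENNReal.ofReal ((2 * r + 2) ^ 3) * I) :=
          mul_le_mul_right hstep3 _
      _ = ENNReal.ofReal ((t ^ 3)⁻¹ * (2 * r + 2) ^ 3) * I := by
          rw [ENNReal.ofReal_mul (by positivity), mul_assoc]
      _ ≤ ENNReal.ofReal (32 * (1 + (N * t) ^ 3) / t ^ 3) * I := by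
          apply mul_le_mul_left
          apply ENNReal.ofReal_le_ofReal
          rw [hrdef]
          have ht3 : (0 : ℝ) < (t ^ 3)⁻¹ := by positivity
          have h8 : (2 * (N * t) + 2) ^ 3 ≤ 32 * (1 + (N * t) ^ 3) := by
            nlinarith [sq_nonneg (N * t - 1), mul_pos hN ht]
          rw [div_eq_mul_inv, mul_comm ((t ^ 3)⁻¹) _]
          exact mul_le_mul_of_nonneg_right h8 ht3.le
  -- integrability on Sᶜ
  have hScsub : Sᶜ ⊆ Metric.closedBall 0 N := by
    intro v hv
    have hv' : ¬ N ≤ ‖v‖ := hv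
    rw [Metric.mem_closedBall, dist_zero_right]
    exact (lt_of_not_ge hv').le
  have habsint : IntegrableOn (fun v : E3 => |ρ₀ (x - t • v) - 1|) Sᶜ := by
    refine Integrable.mono' (g := fun _ : E3 => 1 + B)
      (integrableOn_const (lt_of_le_of_lt (measure_mono hScsub)
        measure_closedBall_lt_top).ne)
      habsmeas.aestronglyMeasurable.restrict (Filter.Eventually.of_forall fun v => ?_)
    rw [Real.norm_eq_abs, abs_abs]
    exact habs _
  have hb2a : ∫ v in Sᶜ, F v ≤ ∫ v in Sᶜ, |ρ₀ (x - t • v) - 1| := by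
    refine setIntegral_mono_on hFint.integrableOn habsint hS.compl (fun v _ => ?_)
    have hone := Mw_key_one v
    have h4 := abs_nonneg (ρ₀ (x - t • v) - 1)
    simp only [hFdef]
    nlinarith [mul_le_mul_of_nonneg_left hone h4]
  have hb2b : ∫ v in Sᶜ, |ρ₀ (x - t • v) - 1| = (∫⁻ v in Sᶜ, h (x - t • v)).toReal := by
    rw [integral_eq_lintegral_of_nonneg_ae (Filter.Eventually.of_forall fun v => abs_nonneg _)
      habsmeas.aestronglyMeasurable.restrict]
  have hRHSne : ENNReal.ofReal (32 * (1 + (N * t) ^ 3) / t ^ 3) * I ≠ ⊤ :=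
    ENNReal.mul_ne_top ENNReal.ofReal_ne_top hIne
  have hb2c : (∫⁻ v in Sᶜ, h (x - t • v)).toReal
      ≤ 32 * (1 + (N * t) ^ 3) / t ^ 3 * I.toReal := by
    have hmono := ENNReal.toReal_mono hRHSne hkey
    rwa [ENNReal.toReal_mul, ENNReal.toReal_ofReal (by positivity)] at hmono
  have bound2 : ∫ v in Sᶜ, F v ≤ 32 * (1 + (N * t) ^ 3) / t ^ 3 * ∫ y in Q, |ρ₀ y - 1| := by
    rw [hIreal]
    calc ∫ v in Sᶜ, F v ≤ ∫ v in Sᶜ, |ρ₀ (x - t • v) - 1| := hb2a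
      _ = (∫⁻ v in Sᶜ, h (x - t • v)).toReal := hb2b
      _ ≤ 32 * (1 + (N * t) ^ 3) / t ^ 3 * I.toReal := hb2c
  rw [← integral_add_compl hS hFint]
  linarith [bound1, bound2]
end

section
/- Let ρ₀ : ℝ³ → ℝ be measurable and nonnegative with ρ₀ − 1 ∈ L¹(ℝ³) and ρ₀lnρ₀ − ρ₀ + 1 ∈ L¹(ℝ³) (with the convention 0·ln 0 = 0), and set F₀(x,v) = ρ₀(x)μ(v). Then F₀lnF₀ − μlnμ, F₀ − μ and |v|²(F₀ − μ) are integrable on ℝ³×ℝ³ and ℰ(F₀) = ∫_{ℝ³}(ρ₀(x)·ln ρ₀(x) − ρ₀(x) + 1)dx. -/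
open MeasureTheory Real Matrix ENNReal

namespace EntEAux
open Filter

/-- 1-D: `x e^{-x²/2} → 0` at `+∞`. -/
lemma tendsto_mul_exp_atTop :
    Tendsto (fun x : ℝ => x * Real.exp (-x ^ 2 / 2)) atTop (nhds 0) := by
  apply squeeze_zero' (g := fun x : ℝ => Real.exp (1 / 2) * (x * Real.exp (-x)))
  · filter_upwards [eventually_ge_atTop (0 : ℝ)] with x hx; positivity
  · filter_upwards [eventually_ge_atTop (0 : ℝ)] with x hx
    have h : Real.exp (-x ^ 2 / 2) ≤ Real.exp (1 / 2) * Real.exp (-x) := by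
      rw [← Real.exp_add]
      apply Real.exp_le_exp.2
      nlinarith [sq_nonneg (x - 1)]
    calc x * Real.exp (-x ^ 2 / 2) ≤ x * (Real.exp (1 / 2) * Real.exp (-x)) :=
          mul_le_mul_of_nonneg_left h hx
      _ = Real.exp (1 / 2) * (x * Real.exp (-x)) := by ring
  · have := (Real.tendsto_pow_mul_exp_neg_atTop_nhds_zero 1).const_mul (Real.exp (1 / 2))
    simpa using this

lemma hasDerivAt_phi (x : ℝ) :
    HasDerivAt (fun y : ℝ => -y * Real.exp (-y ^ 2 / 2))
      ((x ^ 2 - 1) * Real.exp (-x ^ 2 / 2)) x := by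
  have h1 : HasDerivAt (fun y : ℝ => -y ^ 2 / 2) (-x) x := by
    have h := (hasDerivAt_pow 2 x).neg.div_const 2
    have e : -x = -(2 * x ^ 1 : ℝ) / 2 := by ring
    rw [e]; exact h
  have h2 := h1.exp
  have h3 := (hasDerivAt_neg x).mul h2
  have e : (x ^ 2 - 1) * Real.exp (-x ^ 2 / 2)
      = -1 * Real.exp (-x ^ 2 / 2) + -x * (Real.exp (-x ^ 2 / 2) * -x) := by ring
  rw [e]; exact h3

lemma integrable_exp_1d : Integrable (fun x : ℝ => Real.exp (-x ^ 2 / 2)) := by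
  have h := integrable_exp_neg_mul_sq (b := (1 / 2 : ℝ)) (by norm_num)
  have e : (fun x : ℝ => Real.exp (-(1 / 2) * x ^ 2)) = fun x => Real.exp (-x ^ 2 / 2) := by
    funext x; ring_nf
  rwa [e] at h

lemma integrable_sq_exp_1d : Integrable (fun x : ℝ => x ^ 2 * Real.exp (-x ^ 2 / 2)) := by
  have h := integrable_rpow_mul_exp_neg_mul_sq (b := (1 / 2 : ℝ)) (by norm_num)
    (s := ((2 : ℕ) : ℝ)) (by norm_num)
  simp only [Real.rpow_natCast] at h
  refine h.congr (Filter.Eventually.of_forall fun x => ?_)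
  ring_nf

lemma integral_exp_1d : ∫ x : ℝ, Real.exp (-x ^ 2 / 2) = Real.sqrt (2 * π) := by
  have h := integral_gaussian (1 / 2 : ℝ)
  have e : (fun x : ℝ => Real.exp (-(1 / 2) * x ^ 2)) = fun x => Real.exp (-x ^ 2 / 2) := by
    funext x; ring_nf
  rw [e] at h
  rw [h]
  norm_num [mul_comm]

lemma integral_sq_exp_1d : ∫ x : ℝ, x ^ 2 * Real.exp (-x ^ 2 / 2) = Real.sqrt (2 * π) := by
  have hInt : Integrable (fun x : ℝ => (x ^ 2 - 1) * Real.exp (-x ^ 2 / 2)) := by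
    refine (integrable_sq_exp_1d.sub integrable_exp_1d).congr
      (Filter.Eventually.of_forall fun x => ?_)
    simp only [Pi.sub_apply]
    ring
  have hbot : Tendsto (fun y : ℝ => -y * Real.exp (-y ^ 2 / 2)) atBot (nhds 0) := by
    have h := tendsto_mul_exp_atTop.comp tendsto_neg_atBot_atTop
    have e : (fun x : ℝ => x * Real.exp (-x ^ 2 / 2)) ∘ Neg.neg
        = fun y : ℝ => -y * Real.exp (-y ^ 2 / 2) := by
      funext y; simp [Function.comp, neg_sq]
    rwa [e] at h
  have htop : Tendsto (fun y : ℝ => -y * Real.exp (-y ^ 2 / 2)) atTop (nhds 0) := by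
    have h := tendsto_mul_exp_atTop.neg
    have e : (fun x : ℝ => -(x * Real.exp (-x ^ 2 / 2)))
        = fun y : ℝ => -y * Real.exp (-y ^ 2 / 2) := by funext y; ring
    rw [e] at h; simpa using h
  have hIoi : ∫ x in Set.Ioi (0 : ℝ), (x ^ 2 - 1) * Real.exp (-x ^ 2 / 2) = 0 := by
    have := integral_Ioi_of_hasDerivAt_of_tendsto
      (f := fun y : ℝ => -y * Real.exp (-y ^ 2 / 2))
      (f' := fun x : ℝ => (x ^ 2 - 1) * Real.exp (-x ^ 2 / 2)) (a := 0)
      ((hasDerivAt_phi 0).continuousAt.continuousWithinAt)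
      (fun x _ => hasDerivAt_phi x) hInt.integrableOn htop
    simpa using this
  have hIic : ∫ x in Set.Iic (0 : ℝ), (x ^ 2 - 1) * Real.exp (-x ^ 2 / 2) = 0 := by
    have := integral_Iic_of_hasDerivAt_of_tendsto
      (f := fun y : ℝ => -y * Real.exp (-y ^ 2 / 2))
      (f' := fun x : ℝ => (x ^ 2 - 1) * Real.exp (-x ^ 2 / 2)) (a := 0)
      ((hasDerivAt_phi 0).continuousAt.continuousWithinAt)
      (fun x _ => hasDerivAt_phi x) hInt.integrableOn hbot
    simpa using this
  have hzero : ∫ x : ℝ, (x ^ 2 - 1) * Real.exp (-x ^ 2 / 2) = 0 := by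
    rw [← intervalIntegral.integral_Iic_add_Ioi hInt.integrableOn hInt.integrableOn, hIic, hIoi, add_zero]
  have expand : ∫ x : ℝ, (x ^ 2 - 1) * Real.exp (-x ^ 2 / 2)
      = (∫ x : ℝ, x ^ 2 * Real.exp (-x ^ 2 / 2)) - ∫ x : ℝ, Real.exp (-x ^ 2 / 2) := by
    rw [← integral_sub integrable_sq_exp_1d integrable_exp_1d]
    congr 1; funext x; ring
  rw [expand, integral_exp_1d] at hzero
  linarith




lemma integrable_exp_E3 {b : ℝ} (hb : 0 < b) :
    Integrable (fun v : E3 => Real.exp (-b * ‖v‖ ^ 2)) := by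
  have h := (GaussianFourier.integrable_cexp_neg_mul_sq_norm_add (V := E3) (b := (b : ℂ))
    (by simpa using hb) 0 0).norm
  refine h.congr (Filter.Eventually.of_forall fun v => ?_)
  simp [Complex.norm_exp, ← Complex.ofReal_pow]

lemma Mw_pos (v : E3) : 0 < Mw v := by
  unfold Mw; positivity

lemma Mw_cont : Continuous Mw := by
  unfold Mw
  exact continuous_const.mul
    (Real.continuous_exp.comp (((continuous_norm.pow 2).neg).div_const 2))

lemma exp_eq (v : E3) : Real.exp (-‖v‖ ^ 2 / 2) = Real.exp (-(1 / 2) * ‖v‖ ^ 2) := by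
  congr 1; ring

lemma integrable_Mw : Integrable Mw := by
  have h := (integrable_exp_E3 (b := 1 / 2) (by norm_num)).const_mul
    ((2 * π) ^ (-(3 : ℝ) / 2))
  refine h.congr (Filter.Eventually.of_forall fun v => ?_)
  show _ = Mw v
  unfold Mw
  rw [exp_eq]

lemma integral_Mw : ∫ v : E3, Mw v = 1 := by
  unfold Mw
  simp_rw [exp_eq]
  rw [integral_const_mul, GaussianFourier.integral_rexp_neg_mul_sq_norm (by norm_num : (0:ℝ) < 1/2)]
  rw [show π / (1 / 2 : ℝ) = 2 * π by ring, finrank_euclideanSpace_fin]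
  rw [← Real.rpow_add Real.two_pi_pos]
  norm_num

lemma integrable_sq_Mw : Integrable (fun v : E3 => ‖v‖ ^ 2 * Mw v) := by
  have c_pos : (0:ℝ) < (2 * π) ^ (-(3 : ℝ) / 2) := by positivity
  refine Integrable.mono'
    ((integrable_exp_E3 (b := 1 / 4) (by norm_num)).const_mul (4 * (2 * π) ^ (-(3 : ℝ) / 2)))
    (((continuous_norm.pow 2).mul Mw_cont).aestronglyMeasurable)
    (Filter.Eventually.of_forall fun v => ?_)
  have hnn : 0 ≤ ‖v‖ ^ 2 * Mw v := mul_nonneg (by positivity) (Mw_pos v).le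
  rw [Real.norm_eq_abs, abs_of_nonneg hnn]
  unfold Mw
  set t : ℝ := ‖v‖ ^ 2 with ht
  have htnn : 0 ≤ t := by positivity
  have h1 : Real.exp (-(t / 4)) * Real.exp (t / 4) = 1 := by
    rw [← Real.exp_add]; simp
  have h2 : t * Real.exp (-(t / 4)) ≤ 4 := by
    nlinarith [Real.add_one_le_exp (t / 4), Real.exp_pos (-(t / 4))]
  have h3 : Real.exp (-t / 2) = Real.exp (-(t / 4)) * Real.exp (-(t / 4)) := by
    rw [← Real.exp_add]; congr 1; ring
  have h4 : -(1 / 4 : ℝ) * t = -(t / 4) := by ring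
  rw [h4, h3]
  calc t * ((2 * π) ^ (-(3 : ℝ) / 2) * (Real.exp (-(t / 4)) * Real.exp (-(t / 4))))
      = (2 * π) ^ (-(3 : ℝ) / 2) * (t * Real.exp (-(t / 4))) * Real.exp (-(t / 4)) := by ring
    _ ≤ (2 * π) ^ (-(3 : ℝ) / 2) * 4 * Real.exp (-(t / 4)) := by
        have := mul_le_mul_of_nonneg_left h2 c_pos.le
        exact mul_le_mul_of_nonneg_right this (Real.exp_pos _).le
    _ = 4 * (2 * π) ^ (-(3 : ℝ) / 2) * Real.exp (-(t / 4)) := by ring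

lemma integral_sq_exp_E3 :
    ∫ v : E3, ‖v‖ ^ 2 * Real.exp (-‖v‖ ^ 2 / 2) = 3 * Real.sqrt (2 * π) ^ 3 := by
  have hmp := (EuclideanSpace.volume_preserving_symm_measurableEquiv_toLp (Fin 3)).symm
  rw [← hmp.integral_comp (MeasurableEquiv.measurableEmbedding _)]
  set e := (MeasurableEquiv.toLp 2 (Fin 3 → ℝ)) with he
  have hnorm : ∀ y : Fin 3 → ℝ, ‖(e y : E3)‖ ^ 2 = ∑ i, (y i) ^ 2 := by
    intro y
    simp only [e, MeasurableEquiv.coe_toLp, EuclideanSpace.norm_eq, PiLp.toLp_apply,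
      Real.norm_eq_abs, sq_abs]
    rw [Real.sq_sqrt]
    exact Finset.sum_nonneg fun i _ => sq_nonneg _
  -- the one–variable factors
  set F : Fin 3 → Fin 3 → ℝ → ℝ :=
    fun i j x => if j = i then x ^ 2 * Real.exp (-x ^ 2 / 2) else Real.exp (-x ^ 2 / 2) with hF
  have hFint : ∀ i j, Integrable (F i j) := by
    intro i j
    by_cases h : j = i <;> simp only [hF, h, if_true, if_false, reduceIte]
    · exact integrable_sq_exp_1d
    · exact integrable_exp_1d
  have hFI : ∀ i j, ∫ x : ℝ, F i j x = Real.sqrt (2 * π) := by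
    intro i j
    by_cases h : j = i <;> simp only [hF, h, if_true, if_false, reduceIte]
    · exact integral_sq_exp_1d
    · exact integral_exp_1d
  have hkey : ∀ y : Fin 3 → ℝ,
      ‖(e y : E3)‖ ^ 2 * Real.exp (-‖(e y : E3)‖ ^ 2 / 2)
        = ∑ i, ∏ j, F i j (y j) := by
    intro y
    have hprod : ∀ i : Fin 3, ∏ j, F i j (y j)
        = (y i) ^ 2 * ∏ j, Real.exp (-(y j) ^ 2 / 2) := by
      intro i
      rw [← Finset.prod_erase_mul _ _ (Finset.mem_univ i),
        ← Finset.prod_erase_mul _ _ (Finset.mem_univ i)]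
      rw [Finset.prod_congr rfl (fun j hj => ?_)]
      · simp only [hF, if_pos rfl]
        ring
      · simp only [hF, if_neg (Finset.ne_of_mem_erase hj)]
    have hexp : Real.exp (-(∑ i, (y i) ^ 2) / 2) = ∏ j, Real.exp (-(y j) ^ 2 / 2) := by
      rw [← Real.exp_sum]
      congr 1
      rw [← Finset.sum_div, Finset.sum_neg_distrib, neg_div]
    rw [hnorm, hexp]
    rw [Finset.sum_mul]
    exact Finset.sum_congr rfl fun i _ => (hprod i).symm
  calc ∫ y : Fin 3 → ℝ, ‖(e y : E3)‖ ^ 2 * Real.exp (-‖(e y : E3)‖ ^ 2 / 2)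
      = ∫ y : Fin 3 → ℝ, ∑ i, ∏ j, F i j (y j) := by
        exact integral_congr_ae (Filter.Eventually.of_forall fun y => hkey y)
    _ = ∑ i, ∫ y : Fin 3 → ℝ, ∏ j, F i j (y j) := by
        refine integral_finset_sum _ fun i _ => ?_
        exact Integrable.fintype_prod (f := F i) (fun j => hFint i j)
    _ = ∑ i : Fin 3, ∏ j, ∫ x : ℝ, F i j x := by
        refine Finset.sum_congr rfl fun i _ => ?_
        exact MeasureTheory.integral_fintype_prod_eq_prod (ι := Fin 3) (F i)
    _ = ∑ i : Fin 3, ∏ _j : Fin 3, Real.sqrt (2 * π) := by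
        refine Finset.sum_congr rfl fun i _ => Finset.prod_congr rfl fun j _ => hFI i j
    _ = 3 * Real.sqrt (2 * π) ^ 3 := by
        rw [Finset.prod_const, Finset.sum_const]
        simp [mul_comm]

lemma integral_sq_Mw : ∫ v : E3, ‖v‖ ^ 2 * Mw v = 3 := by
  unfold Mw
  have e1 : (fun v : E3 => ‖v‖ ^ 2 * ((2 * π) ^ (-(3 : ℝ) / 2) * Real.exp (-‖v‖ ^ 2 / 2)))
      = fun v : E3 => (2 * π) ^ (-(3 : ℝ) / 2) * (‖v‖ ^ 2 * Real.exp (-‖v‖ ^ 2 / 2)) := by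
    funext v; ring
  rw [e1, integral_const_mul, integral_sq_exp_E3]
  have h3 : Real.sqrt (2 * π) ^ 3 = (2 * π) ^ ((3 : ℝ) / 2) := by
    rw [Real.sqrt_eq_rpow, ← Real.rpow_natCast ((2 * π) ^ ((1:ℝ)/2)) 3,
      ← Real.rpow_mul Real.two_pi_pos.le]
    norm_num
  rw [h3]
  rw [show (2 * π) ^ (-(3 : ℝ) / 2) * (3 * (2 * π) ^ ((3 : ℝ) / 2))
      = 3 * ((2 * π) ^ (-(3 : ℝ) / 2) * (2 * π) ^ ((3 : ℝ) / 2)) from by ring,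
    ← Real.rpow_add Real.two_pi_pos]
  norm_num

lemma log_Mw (v : E3) : Real.log (Mw v)
    = -(3 / 2) * Real.log (2 * π) - ‖v‖ ^ 2 / 2 := by
  unfold Mw
  rw [Real.log_mul (by positivity) (Real.exp_pos _).ne', Real.log_rpow Real.two_pi_pos,
    Real.log_exp]
  ring

end EntEAux

/-- for `F₀(x,v) = ρ₀(x)μ(v)` the entropy functional reduces to
`ℰ(F₀) = ∫ (ρ₀ ln ρ₀ - ρ₀ + 1) dx`. -/
theorem entE_of_local_maxwellian
    (ρ₀ : E3 → ℝ) (hmeas : Measurable ρ₀) (hnn : ∀ x, 0 ≤ ρ₀ x)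
    (h1 : Integrable (fun x => ρ₀ x - 1))
    (h2 : Integrable (fun x => ρ₀ x * Real.log (ρ₀ x) - ρ₀ x + 1)) :
    Integrable (fun p : E3 × E3 =>
      ρ₀ p.1 * Mw p.2 * Real.log (ρ₀ p.1 * Mw p.2) - Mw p.2 * Real.log (Mw p.2)) ∧
    Integrable (fun p : E3 × E3 => ρ₀ p.1 * Mw p.2 - Mw p.2) ∧
    Integrable (fun p : E3 × E3 => ‖p.2‖ ^ 2 * (ρ₀ p.1 * Mw p.2 - Mw p.2)) ∧
    entE (fun x v => ρ₀ x * Mw v) = ∫ x, (ρ₀ x * Real.log (ρ₀ x) - ρ₀ x + 1) := by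
  have hMwInt := EntEAux.integrable_Mw
  have hMwI := EntEAux.integral_Mw
  have hsqInt := EntEAux.integrable_sq_Mw
  have hsqI := EntEAux.integral_sq_Mw
  have hMlog_eq : (fun v : E3 => Mw v * Real.log (Mw v))
      = fun v => (-(3 / 2) * Real.log (2 * π)) * Mw v - 1 / 2 * (‖v‖ ^ 2 * Mw v) := by
    funext v
    rw [EntEAux.log_Mw]
    ring
  have hMlogInt : Integrable (fun v : E3 => Mw v * Real.log (Mw v)) := by
    rw [hMlog_eq]
    exact (hMwInt.const_mul _).sub (hsqInt.const_mul _)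
  have hMlogI : ∫ v : E3, Mw v * Real.log (Mw v)
      = -(3 / 2) * Real.log (2 * π) - 3 / 2 := by
    rw [hMlog_eq, integral_sub (hMwInt.const_mul _) (hsqInt.const_mul _),
      integral_const_mul, integral_const_mul, hMwI, hsqI]
    ring
  have hMlogMInt : Integrable (fun v : E3 => Mw v * Real.log (Mw v) + Mw v) :=
    hMlogInt.add hMwInt
  have hMlogMI : ∫ v : E3, (Mw v * Real.log (Mw v) + Mw v)
      = -(3 / 2) * Real.log (2 * π) - 1 / 2 := by
    rw [integral_add hMlogInt hMwInt, hMlogI, hMwI]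
    ring
  -- pointwise decompositions
  have hf1eq : (fun p : E3 × E3 =>
        ρ₀ p.1 * Mw p.2 * Real.log (ρ₀ p.1 * Mw p.2) - Mw p.2 * Real.log (Mw p.2))
      = fun p : E3 × E3 => (ρ₀ p.1 * Real.log (ρ₀ p.1) - ρ₀ p.1 + 1) * Mw p.2
          + (ρ₀ p.1 - 1) * (Mw p.2 * Real.log (Mw p.2) + Mw p.2) := by
    funext p
    by_cases h : ρ₀ p.1 = 0
    · rw [h]; ring
    · rw [Real.log_mul h (EntEAux.Mw_pos p.2).ne']
      ring
  have hf2eq : (fun p : E3 × E3 => ρ₀ p.1 * Mw p.2 - Mw p.2)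
      = fun p : E3 × E3 => (ρ₀ p.1 - 1) * Mw p.2 := by
    funext p; ring
  have hf3eq : (fun p : E3 × E3 => ‖p.2‖ ^ 2 * (ρ₀ p.1 * Mw p.2 - Mw p.2))
      = fun p : E3 × E3 => (ρ₀ p.1 - 1) * (‖p.2‖ ^ 2 * Mw p.2) := by
    funext p; ring
  -- integrabilities on the product space
  have hf1A : Integrable (fun p : E3 × E3 =>
      (ρ₀ p.1 * Real.log (ρ₀ p.1) - ρ₀ p.1 + 1) * Mw p.2)
      ((volume : Measure E3).prod volume) := h2.mul_prod hMwInt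
  have hf1B : Integrable (fun p : E3 × E3 =>
      (ρ₀ p.1 - 1) * (Mw p.2 * Real.log (Mw p.2) + Mw p.2))
      ((volume : Measure E3).prod volume) := h1.mul_prod hMlogMInt
  have hint1 : Integrable (fun p : E3 × E3 =>
      ρ₀ p.1 * Mw p.2 * Real.log (ρ₀ p.1 * Mw p.2) - Mw p.2 * Real.log (Mw p.2)) := by
    rw [hf1eq, Measure.volume_eq_prod E3 E3]
    exact hf1A.add hf1B
  have hint2 : Integrable (fun p : E3 × E3 => ρ₀ p.1 * Mw p.2 - Mw p.2) := by
    rw [hf2eq, Measure.volume_eq_prod E3 E3]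
    exact h1.mul_prod hMwInt
  have hint3 : Integrable (fun p : E3 × E3 => ‖p.2‖ ^ 2 * (ρ₀ p.1 * Mw p.2 - Mw p.2)) := by
    rw [hf3eq, Measure.volume_eq_prod E3 E3]
    exact h1.mul_prod hsqInt
  refine ⟨hint1, hint2, hint3, ?_⟩
  -- the three integrals
  have I1 : ∫ p : E3 × E3,
      (ρ₀ p.1 * Mw p.2 * Real.log (ρ₀ p.1 * Mw p.2) - Mw p.2 * Real.log (Mw p.2))
      = (∫ x : E3, (ρ₀ x * Real.log (ρ₀ x) - ρ₀ x + 1))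
        + (∫ x : E3, (ρ₀ x - 1)) * (-(3 / 2) * Real.log (2 * π) - 1 / 2) := by
    rw [hf1eq, Measure.volume_eq_prod E3 E3, integral_add hf1A hf1B,
      integral_prod_mul (fun x : E3 => ρ₀ x * Real.log (ρ₀ x) - ρ₀ x + 1) Mw,
      integral_prod_mul (fun x : E3 => ρ₀ x - 1) (fun v : E3 => Mw v * Real.log (Mw v) + Mw v),
      hMwI, hMlogMI, mul_one]
  have I2 : ∫ p : E3 × E3, (ρ₀ p.1 * Mw p.2 - Mw p.2) = ∫ x : E3, (ρ₀ x - 1) := by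
    rw [hf2eq, Measure.volume_eq_prod E3 E3,
      integral_prod_mul (fun x : E3 => ρ₀ x - 1) Mw, hMwI, mul_one]
  have I3 : ∫ p : E3 × E3, ‖p.2‖ ^ 2 * (ρ₀ p.1 * Mw p.2 - Mw p.2)
      = (∫ x : E3, (ρ₀ x - 1)) * 3 := by
    rw [hf3eq, Measure.volume_eq_prod E3 E3,
      integral_prod_mul (fun x : E3 => ρ₀ x - 1) (fun v : E3 => ‖v‖ ^ 2 * Mw v), hsqI]
  simp only [entE]
  rw [I1, I2, I3]
  ring
end
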